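/- arXiv:0806.2264 — 3 statements merged into one kernel-verified Lean document; each statement's English description precedes it below -/
import Mathlib

section
/- There exists a graph model G_min whose order theory is minimum among the order theories of all graph models: Th_⊑(G_min) ⊆ Th_⊑(G) for every graph model G; consequently Th(G_min) ⊆ Th(G) for every graph model G. -/
universe u v

/-- Untyped λ-terms in de Bruijn notation (over the countably infinite
supply of variables `ℕ`). -/
inductive Term : Type
  | var : ℕ → Term
  | app : Term → Term → Term
  | lam : Term → Term
  deriving DecidableEq

namespace Term

/-- Shift the free variables `≥ d` up by one. -/
def lift (d : ℕ) : Term → Term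
  | var n => if n < d then var n else var (n + 1)
  | app M N => app (lift d M) (lift d N)
  | lam M => lam (lift (d + 1) M)

/-- Capture-avoiding substitution of `N` for the free variable `k`. -/
def subst : Term → ℕ → Term → Term
  | var n, k, N => if n = k then N else if k < n then var (n - 1) else var n
  | app P Q, k, N => app (subst P k N) (subst Q k N)
  | lam P, k, N => lam (subst P (k + 1) (lift 0 N))

/-- One-step β-reduction. -/
inductive Step : Term → Term → Prop
  | beta (M N : Term) : Step (app (lam M) N) (subst M 0 N)
  | appL {M M' : Term} (N : Term) : Step M M' → Step (app M N) (app M' N)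
  | appR (M : Term) {N N' : Term} : Step N N' → Step (app M N) (app M N')
  | abs {M M' : Term} : Step M M' → Step (lam M) (lam M')

/-- β-conversion: the least equivalence relation containing one-step β-reduction. -/
inductive BetaConv : Term → Term → Prop
  | of {M N : Term} : Step M N → BetaConv M N
  | refl (M : Term) : BetaConv M M
  | symm {M N : Term} : BetaConv M N → BetaConv N M
  | trans {M N P : Term} : BetaConv M N → BetaConv N P → BetaConv M P

/-- All free variables are `< d`. -/
def BoundedBy : Term → ℕ → Prop
  | var n, d => n < d
  | app M N, d => BoundedBy M d ∧ BoundedBy N d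
  | lam M, d => BoundedBy M (d + 1)

/-- Closed λ-terms. -/
def Closed (M : Term) : Prop := BoundedBy M 0

/-- Terms of the form `y M₁ ⋯ Mₖ` (a variable applied to arguments). -/
inductive IsVarApp : Term → Prop
  | var (n : ℕ) : IsVarApp (var n)
  | app {M : Term} (N : Term) : IsVarApp M → IsVarApp (app M N)

/-- Head normal forms `λx₁…xₙ. y M₁ ⋯ Mₖ`. -/
inductive IsHnf : Term → Prop
  | head {M : Term} : IsVarApp M → IsHnf M
  | abs {M : Term} : IsHnf M → IsHnf (lam M)

/-- A λ-term is solvable if it is β-convertible to a head normal form. -/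
def Solvable (M : Term) : Prop := ∃ N, BetaConv M N ∧ IsHnf N

/-- Unsolvable λ-terms. -/
def Unsolvable (M : Term) : Prop := ¬ Solvable M

/-- β-normal forms: terms containing no β-redex. -/
def IsNormal : Term → Prop
  | var _ => True
  | lam M => IsNormal M
  | app M N => (∀ P, M ≠ lam P) ∧ IsNormal M ∧ IsNormal N

/-- A fixed effective bijective Gödel numbering of λ-terms. -/
def code : Term → ℕ
  | var n => 3 * n
  | app M N => 3 * Nat.pair (code M) (code N) + 1
  | lam M => 3 * code M + 2

/-- `δ = λx.xx`. -/
def delta : Term := lam (app (var 0) (var 0))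

/-- `Ω = (λx.xx)(λx.xx)`. -/
def Omega : Term := app delta delta

/-- `I = λx.x`. -/
def Idt : Term := lam (var 0)

end Term

open Term

/-- A set of λ-terms is r.e. if its set of Gödel codes is r.e. -/
def TermSetRe (V : Set Term) : Prop := REPred fun n : ℕ => ∃ M ∈ V, code M = n

/-- A set of λ-terms is co-r.e. if its set of Gödel codes is co-r.e.; since the
numbering is bijective this means that the code set of the complement is r.e. -/
def TermSetCoRe (V : Set Term) : Prop := TermSetRe Vᶜ

/-- β-co-r.e. sets: co-r.e. sets of λ-terms closed under β-conversion. -/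
def BetaCoRe (V : Set Term) : Prop :=
  (∀ M N, M ∈ V → BetaConv M N → N ∈ V) ∧ TermSetCoRe V

/-- A set of pairs of λ-terms is r.e. if the corresponding set of codes of
pairs is r.e. -/
def PairsRe (T : Set (Term × Term)) : Prop :=
  REPred fun n : ℕ => ∃ p ∈ T, Nat.pair (code p.1) (code p.2) = n

/-- λ-theories: congruences on Λ containing β-conversion. -/
def IsLambdaTheory (T : Term → Term → Prop) : Prop :=
  Equivalence T ∧
  (∀ M M' N N', T M M' → T N N' → T (Term.app M N) (Term.app M' N')) ∧
  (∀ M M', T M M' → T (Term.lam M) (Term.lam M')) ∧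
  (∀ M N, BetaConv M N → T M N)

/-- Partial pairs (as raw data): a carrier set together with a partial map `j`,
given as an `Option`-valued map on pairs of a subset and an element. -/
structure PrePair (α : Type u) : Type u where
  carrier : Set α
  j : Set α × α → Option α

namespace PrePair

variable {α : Type u}

/-- The defining conditions of a partial pair: the carrier is non-empty and `j`
is a partial injection `A* × A ⇀ A`. -/
def Valid (P : PrePair α) : Prop :=
  P.carrier.Nonempty ∧
  (∀ a x y, P.j (a, x) = some y →
      a.Finite ∧ a ⊆ P.carrier ∧ x ∈ P.carrier ∧ y ∈ P.carrier) ∧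
  (∀ p q y, P.j p = some y → P.j q = some y → p = q)

/-- Total pairs: `j` is defined on every pair of a finite subset of the
carrier and an element of the carrier. -/
def Total (P : PrePair α) : Prop :=
  ∀ a x, a.Finite → a ⊆ P.carrier → x ∈ P.carrier → ∃ y, P.j (a, x) = some y

/-- Webs of graph models: total pairs with infinite carrier. -/
def IsGraphModel (P : PrePair α) : Prop := P.Valid ∧ P.Total ∧ P.carrier.Infinite

/-- The subpair relation `A ⊑ B`. -/
def Subpair (P Q : PrePair α) : Prop :=
  P.carrier ⊆ Q.carrier ∧ ∀ p y, P.j p = some y → Q.j p = some y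

end PrePair

/-- Consing a value onto an environment (de Bruijn style). -/
def envCons {α : Type u} (s : Set α) (ρ : ℕ → Set α) : ℕ → Set α
  | 0 => s
  | n + 1 => ρ n

/-- The interpretation of a λ-term with respect to a partial pair and an
environment. -/
def interp {α : Type u} (P : PrePair α) : Term → (ℕ → Set α) → Set α
  | Term.var n, ρ => ρ n
  | Term.app M N, ρ =>
      {y | ∃ a : Set α, a.Finite ∧ a ⊆ interp P N ρ ∧
        ∃ z, P.j (a, y) = some z ∧ z ∈ interp P M ρ}
  | Term.lam M, ρ =>
      {y | ∃ (a : Set α) (x : α), a.Finite ∧ P.j (a, x) = some y ∧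
        x ∈ interp P M (envCons a ρ)}

/-- The interpretation of a closed λ-term. -/
def interpC {α : Type u} (P : PrePair α) (M : Term) : Set α :=
  interp P M fun _ => (∅ : Set α)

/-- The order theory of (the graph model generated by) a pair. -/
def ThLe {α : Type u} (P : PrePair α) : Set (Term × Term) :=
  {p | ∀ ρ : ℕ → Set α, (∀ n, ρ n ⊆ P.carrier) → interp P p.1 ρ ⊆ interp P p.2 ρ}

/-- The equational theory of (the graph model generated by) a pair. -/
def Th {α : Type u} (P : PrePair α) : Set (Term × Term) :=
  {p | ∀ ρ : ℕ → Set α, (∀ n, ρ n ⊆ P.carrier) → interp P p.1 ρ = interp P p.2 ρ}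

/-- Morphisms of partial pairs. -/
def IsMorphism {α : Type u} {β : Type v} (P : PrePair α) (Q : PrePair β)
    (f : α → β) : Prop :=
  Set.MapsTo f P.carrier Q.carrier ∧
  ∀ a x y, a ⊆ P.carrier → x ∈ P.carrier → P.j (a, x) = some y →
    Q.j (f '' a, f x) = some (f y)

/-- Isomorphisms of partial pairs: morphisms which are bijections between the
carriers and whose inverse is also a morphism. -/
def IsIso {α : Type u} {β : Type v} (P : PrePair α) (Q : PrePair β)
    (f : α → β) : Prop :=
  IsMorphism P Q f ∧
  ∃ g : β → α, IsMorphism Q P g ∧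
    (∀ x ∈ P.carrier, g (f x) = x) ∧ ∀ y ∈ Q.carrier, f (g y) = y

/-- The ambient type of the free completion: formal copies `base x` of the
original elements together with formal pairs `node`. -/
inductive FC (α : Type u) : Type u
  | base : α → FC α
  | node : List (FC α) → FC α → FC α

namespace FC

variable {α : Type u}

open scoped Classical

/-- A canonical list enumerating a finite set. -/
noncomputable def listOf (s : Set (FC α)) : List (FC α) :=
  if h : s.Finite then h.toFinset.toList else []

/-- The copy of the original carrier inside `FC α`. -/
def baseSet (P : PrePair α) : Set (FC α) := base '' P.carrier

/-- `(a, x)` is the copy of a pair in the domain of `j`. -/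
def IsOldDom (P : PrePair α) (a : Set (FC α)) (x : FC α) : Prop :=
  ∃ (a₀ : Set α) (x₀ : α), a = base '' a₀ ∧ x = base x₀ ∧ (P.j (a₀, x₀)).isSome

/-- The increasing stages `Aₙ` of the free completion:
`A₀ = A` and `A_{n+1} = A ∪ ((Aₙ* × Aₙ) ∖ dom j)`. -/
def stage (P : PrePair α) : ℕ → Set (FC α)
  | 0 => baseSet P
  | n + 1 => baseSet P ∪
      {t | ∃ (a : Set (FC α)) (x : FC α), a.Finite ∧ a ⊆ stage P n ∧
        x ∈ stage P n ∧ ¬ IsOldDom P a x ∧ t = node (listOf a) x}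

/-- The carrier `Ā = ⋃ₙ Aₙ` of the free completion. -/
def compCarrier (P : PrePair α) : Set (FC α) := ⋃ n, stage P n

/-- `y` is the copy of the old value `j (a₀, x₀)`, where `(a, x)` is the copy
of `(a₀, x₀) ∈ dom j`. -/
def OldVal (P : PrePair α) (a : Set (FC α)) (x y : FC α) : Prop :=
  ∃ (a₀ : Set α) (x₀ y₀ : α), a = base '' a₀ ∧ x = base x₀ ∧
    P.j (a₀, x₀) = some y₀ ∧ y = base y₀

/-- The total injection `j̄` of the free completion: it extends `j` and sends
every other pair `(a, α)` of the completion to (the formal copy of) itself. -/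
noncomputable def jbar (P : PrePair α) (p : Set (FC α) × FC α) : Option (FC α) :=
  if p.1.Finite ∧ p.1 ⊆ compCarrier P ∧ p.2 ∈ compCarrier P then
    if h : ∃ y, OldVal P p.1 p.2 y then some h.choose
    else some (node (listOf p.1) p.2)
  else none

end FC

/-- The free completion `Ā` of a partial pair `A`, as a total pair on `FC α`. -/
noncomputable def completion {α : Type u} (P : PrePair α) : PrePair (FC α) :=
  ⟨FC.compCarrier P, FC.jbar P⟩

/-- The fixed effective encoding of finite subsets of `ℕ`. -/
def encF (s : Finset ℕ) : ℕ := s.sum fun i => 2 ^ i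

/-- A partial pair on `ℕ` whose carrier is a decidable set and whose map `j` is
partial recursive with decidable domain (under the fixed effective encoding of
finite sets and pairs). -/
def ConcreteWE (Q : PrePair ℕ) : Prop :=
  ComputablePred (· ∈ Q.carrier) ∧
  ∃ f : ℕ →. ℕ, Nat.Partrec f ∧ ComputablePred (fun n => (f n).Dom) ∧
    ∀ (a : Finset ℕ) (x y : ℕ), Q.j (↑a, x) = some y ↔ y ∈ f (Nat.pair (encF a) x)

/-- The range of `j` is decidable. -/
def ConcreteRange (Q : PrePair ℕ) : Prop :=
  ComputablePred fun y => ∃ p, Q.j p = some y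

/-- Weakly effective partial pairs: partial pairs isomorphic to a partial pair
on `ℕ` with decidable carrier whose `j` is partial recursive with decidable
domain. -/
def WeaklyEffective {α : Type u} (P : PrePair α) : Prop :=
  ∃ Q : PrePair ℕ, ConcreteWE Q ∧ ∃ f : α → ℕ, IsIso P Q f

/-- Effective partial pairs: weakly effective via a pair whose `j` moreover has
decidable range. -/
def EffectivePair {α : Type u} (P : PrePair α) : Prop :=
  ∃ Q : PrePair ℕ, ConcreteWE Q ∧ ConcreteRange Q ∧ ∃ f : α → ℕ, IsIso P Q f

/-- Effective total pairs: total pairs isomorphic to some `(ℕ, ℓ)` with `ℓ`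
total recursive, injective and with decidable range. -/
def EffectiveTotalPair {α : Type u} (P : PrePair α) : Prop :=
  ∃ Q : PrePair ℕ, Q.carrier = Set.univ ∧
    (∃ f : ℕ → ℕ, Computable f ∧ Function.Injective f ∧
      ComputablePred (fun y => ∃ n, f n = y) ∧
      ∀ (a : Finset ℕ) (x : ℕ), Q.j (↑a, x) = some (f (Nat.pair (encF a) x))) ∧
    ∃ h : α → ℕ, IsIso P Q h

namespace MinGraph
open scoped Classical
noncomputable section

lemma sum_range_two_pow (n : ℕ) : (Finset.range n).sum (fun i => 2^i) = 2^n - 1 := by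
  induction n with
  | zero => simp
  | succ n ih =>
    rw [Finset.sum_range_succ, ih, pow_succ]
    have h : 1 ≤ 2^n := Nat.one_le_two_pow
    omega

lemma two_pow_le_encF {m : ℕ} {s : Finset ℕ} (h : m ∈ s) : 2 ^ m ≤ encF s :=
  Finset.single_le_sum (fun i _ => Nat.zero_le _) h

lemma mem_lt_encF {m : ℕ} {s : Finset ℕ} (h : m ∈ s) : m < encF s :=
  lt_of_lt_of_le (Nat.lt_two_pow_self (n := m)) (two_pow_le_encF h)

lemma encF_lt_of_subset_range {s : Finset ℕ} {n : ℕ} (h : s ⊆ Finset.range n) :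
    encF s < 2 ^ n := by
  have : encF s ≤ (Finset.range n).sum (fun i => 2^i) :=
    Finset.sum_le_sum_of_subset h
  rw [sum_range_two_pow] at this
  have h2 : 1 ≤ 2^n := Nat.one_le_two_pow
  omega

lemma encF_inj_aux : ∀ (n : ℕ) (s t : Finset ℕ), s ⊆ Finset.range n → t ⊆ Finset.range n →
    encF s = encF t → s = t := by
  intro n
  induction n with
  | zero =>
    intro s t hs ht _
    simp only [Finset.range_zero, Finset.subset_empty] at hs ht
    rw [hs, ht]
  | succ n ih =>
    intro s t hs ht he
    have hsub : ∀ u : Finset ℕ, u ⊆ Finset.range (n+1) → n ∉ u → u ⊆ Finset.range n := by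
      intro u hu hnu m hm
      have := hu hm
      rw [Finset.mem_range] at this ⊢
      rcases Nat.lt_succ_iff_lt_or_eq.mp this with h | h
      · exact h
      · exact absurd (h ▸ hm) hnu
    by_cases hns : n ∈ s <;> by_cases hnt : n ∈ t
    · -- erase both
      have hes : 2^n + encF (s.erase n) = encF s :=
        Finset.add_sum_erase s (fun i => 2^i) hns
      have het : 2^n + encF (t.erase n) = encF t :=
        Finset.add_sum_erase t (fun i => 2^i) hnt
      have heq : encF (s.erase n) = encF (t.erase n) := by omega
      have herase := ih (s.erase n) (t.erase n)
        (hsub _ (fun m hm => hs (Finset.erase_subset _ _ hm)) (Finset.notMem_erase _ _))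
        (hsub _ (fun m hm => ht (Finset.erase_subset _ _ hm)) (Finset.notMem_erase _ _)) heq
      calc s = insert n (s.erase n) := (Finset.insert_erase hns).symm
        _ = insert n (t.erase n) := by rw [herase]
        _ = t := Finset.insert_erase hnt
    · exfalso
      have h1 : 2^n ≤ encF s := two_pow_le_encF hns
      have h2 : encF t < 2^n := encF_lt_of_subset_range (hsub t ht hnt)
      omega
    · exfalso
      have h1 : 2^n ≤ encF t := two_pow_le_encF hnt
      have h2 : encF s < 2^n := encF_lt_of_subset_range (hsub s hs hns)
      omega
    · exact ih s t (hsub s hs hns) (hsub t ht hnt) he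

lemma encF_injective : Function.Injective encF := by
  intro s t he
  classical
  obtain ⟨n, hn⟩ : ∃ n, s ⊆ Finset.range n ∧ t ⊆ Finset.range n := by
    refine ⟨(s ∪ t).sup id + 1, fun m hm => ?_, fun m hm => ?_⟩ <;>
    · rw [Finset.mem_range]
      have : m ≤ (s ∪ t).sup id := Finset.le_sup (f := id) (by simp [hm])
      omega
  exact encF_inj_aux _ s t hn.1 hn.2 he


abbrev Fact := Finset ℕ × ℕ × ℕ

/-- validity of a fact set: the partial map is functional and injective. -/
def validF (F : Finset Fact) : Prop :=
  ∀ t ∈ F, ∀ t' ∈ F, (t.2.2 = t'.2.2 ↔ (t.1 = t'.1 ∧ t.2.1 = t'.2.1))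

/-- decoded fact set of component `k`. -/
def Fk (k : ℕ) : Finset Fact :=
  match (Encodable.decode k : Option (Finset Fact)) with
  | some F => if validF F then F else ∅
  | none => ∅

lemma validF_Fk (k : ℕ) : validF (Fk k) := by
  unfold Fk
  rcases h : (Encodable.decode k : Option (Finset Fact)) with _ | F
  · intro t ht; simp at ht
  · by_cases hv : validF F
    · simpa [hv] using hv
    · simp only [hv, if_false]; intro t ht; simp at ht

lemma Fk_encode {F : Finset Fact} (hv : validF F) : Fk (Encodable.encode F) = F := by
  unfold Fk
  rw [Encodable.encodek]
  simp [hv]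

/-- codes of base elements and fresh nodes -/
def bs (k m : ℕ) : ℕ := 2 * Nat.pair k m
def dnode (c x : ℕ) : ℕ := 2 * Nat.pair c x + 1

lemma bs_inj {k m k' m'} (h : bs k m = bs k' m') : k = k' ∧ m = m' := by
  unfold bs at h
  have h2 : Nat.pair k m = Nat.pair k' m' := by omega
  exact Nat.pair_eq_pair.mp h2

lemma bs_ne_dnode (k m c x : ℕ) : bs k m ≠ dnode c x := by unfold bs dnode; omega

lemma dnode_inj {c x c' x'} (h : dnode c x = dnode c' x') : c = c' ∧ x = x' := by
  unfold dnode at h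
  exact Nat.pair_eq_pair.mp (by omega)

/-- `(s, x)` is the (coded) pair of the fact `t` of component `k`. -/
def IsFact (s : Finset ℕ) (x : ℕ) (k : ℕ) (t : Fact) : Prop :=
  t ∈ Fk k ∧ x = bs k t.2.1 ∧ s = t.1.image (bs k)

lemma IsFact_unique {s x k t k' t'} (h : IsFact s x k t) (h' : IsFact s x k' t') :
    k = k' ∧ t = t' := by
  obtain ⟨ht, hx, hs⟩ := h
  obtain ⟨ht', hx', hs'⟩ := h'
  obtain ⟨hk, hm⟩ := bs_inj (hx.symm.trans hx')
  subst hk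
  have h1 : t.1 = t'.1 := by
    have : Function.Injective (bs k) := fun a b hab => (bs_inj hab).2
    exact Finset.image_injective this (hs ▸ hs')
  have h22 : t.2.2 = t'.2.2 := ((validF_Fk k) t ht t' ht').mpr ⟨h1, hm⟩
  refine ⟨rfl, ?_⟩
  exact Prod.ext h1 (Prod.ext hm h22)

/-- the total injection underlying the minimal graph model (on finset-coded sets). -/
def jval (s : Finset ℕ) (x : ℕ) : ℕ :=
  if h : ∃ k t, IsFact s x k t
  then bs h.choose h.choose_spec.choose.2.2
  else dnode (encF s) x

lemma jval_fact {s x k t} (h : IsFact s x k t) : jval s x = bs k t.2.2 := by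
  unfold jval
  have hex : ∃ k t, IsFact s x k t := ⟨k, t, h⟩
  rw [dif_pos hex]
  obtain ⟨hk, ht⟩ := IsFact_unique hex.choose_spec.choose_spec h
  rw [ht, hk]

lemma jval_nofact {s x} (h : ¬ ∃ k t, IsFact s x k t) : jval s x = dnode (encF s) x := by
  unfold jval; rw [dif_neg h]

lemma jval_inj {s x s' x'} (h : jval s x = jval s' x') : s = s' ∧ x = x' := by
  by_cases h1 : ∃ k t, IsFact s x k t <;> by_cases h2 : ∃ k t, IsFact s' x' k t
  · obtain ⟨k, t, hf⟩ := h1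
    obtain ⟨k', t', hf'⟩ := h2
    rw [jval_fact hf, jval_fact hf'] at h
    obtain ⟨hk, hy⟩ := bs_inj h
    subst hk
    have : t = t' := by
      refine Prod.ext ?_ (Prod.ext ?_ hy)
      · exact ((validF_Fk k) t hf.1 t' hf'.1 |>.mp hy).1
      · exact ((validF_Fk k) t hf.1 t' hf'.1 |>.mp hy).2
    subst this
    rw [hf.2.1, hf'.2.1, hf.2.2, hf'.2.2]
    exact ⟨rfl, rfl⟩
  · rw [jval_fact h1.choose_spec.choose_spec, jval_nofact h2] at h
    exact absurd h (bs_ne_dnode _ _ _ _)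
  · rw [jval_nofact h1, jval_fact h2.choose_spec.choose_spec] at h
    exact absurd h.symm (bs_ne_dnode _ _ _ _)
  · rw [jval_nofact h1, jval_nofact h2] at h
    obtain ⟨hc, hx⟩ := dnode_inj h
    exact ⟨encF_injective hc, hx⟩

/-- the minimal graph model: carrier `ℕ`, total injection `jval`. -/
def Gmin : PrePair ℕ :=
  ⟨Set.univ, fun p => if h : ∃ s : Finset ℕ, ↑s = p.1 then some (jval h.choose p.2) else none⟩

lemma coe_choose {a : Set ℕ} (h : ∃ s : Finset ℕ, ↑s = a) : (↑h.choose : Set ℕ) = a :=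
  h.choose_spec

lemma Gmin_j_coe (s : Finset ℕ) (x : ℕ) : Gmin.j (↑s, x) = some (jval s x) := by
  have h : ∃ t : Finset ℕ, (↑t : Set ℕ) = ↑s := ⟨s, rfl⟩
  have hc : h.choose = s := Finset.coe_injective h.choose_spec
  simp only [Gmin, dif_pos h, hc]

lemma Gmin_j_eq_some {a : Set ℕ} {x y : ℕ} (h : Gmin.j (a, x) = some y) :
    ∃ s : Finset ℕ, ↑s = a ∧ y = jval s x := by
  by_cases hf : ∃ s : Finset ℕ, ↑s = a
  · refine ⟨hf.choose, hf.choose_spec, ?_⟩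
    simp only [Gmin, dif_pos hf] at h
    exact (Option.some_injective _ h).symm
  · simp only [Gmin, dif_neg hf] at h
    exact absurd h (by simp)

theorem Gmin_isGraphModel : Gmin.IsGraphModel := by
  refine ⟨⟨⟨0, trivial⟩, ?_, ?_⟩, ?_, ?_⟩
  · rintro a x y h
    obtain ⟨s, hs, -⟩ := Gmin_j_eq_some h
    refine ⟨?_, by simp [Gmin], by simp [Gmin], by simp [Gmin]⟩
    rw [← hs]; exact s.finite_toSet
  · rintro ⟨a, x⟩ ⟨b, x'⟩ y h h'
    obtain ⟨s, hs, hy⟩ := Gmin_j_eq_some h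
    obtain ⟨s', hs', hy'⟩ := Gmin_j_eq_some h'
    obtain ⟨h1, h2⟩ := jval_inj (hy.symm.trans hy')
    subst h1; subst h2
    rw [← hs, ← hs']
  · rintro a x hfin - -
    lift a to Finset ℕ using hfin
    exact ⟨jval a x, Gmin_j_coe a x⟩
  · exact Set.infinite_univ

/-- the sub-pair of hereditarily `k`-pure elements (completion of the `k`-th
partial pair). -/
inductive Ck (k : ℕ) : ℕ → Prop
  | base (m : ℕ) : Ck k (bs k m)
  | node (s : Finset ℕ) (x : ℕ) : (∀ m ∈ s, Ck k m) → Ck k x →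
      (¬ ∃ k' t, IsFact s x k' t) → Ck k (dnode (encF s) x)

lemma Ck_even_bs {k n : ℕ} (h : Ck k n) (he : n % 2 = 0) : ∃ m, n = bs k m := by
  cases h with
  | base m => exact ⟨m, rfl⟩
  | node s x _ _ _ => exfalso; unfold dnode at he; omega

lemma Ck_jval {k : ℕ} {s : Finset ℕ} {x : ℕ} (hs : ∀ m ∈ s, Ck k m) (hx : Ck k x) :
    Ck k (jval s x) := by
  by_cases h : ∃ k' t, IsFact s x k' t
  · obtain ⟨k', t, hf⟩ := h
    rw [jval_fact hf]
    have : x = bs k' t.2.1 := hf.2.1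
    obtain ⟨m, hm⟩ := Ck_even_bs hx (by rw [this]; unfold bs; omega)
    obtain ⟨hk, -⟩ := bs_inj (this.symm.trans hm)
    subst hk
    exact Ck.base _
  · rw [jval_nofact h]
    exact Ck.node s x hs hx h

/-- the `k`-th component graph model. -/
def Gk (k : ℕ) : PrePair ℕ :=
  ⟨{n | Ck k n}, fun p =>
    if h : (∃ s : Finset ℕ, ↑s = p.1) ∧ p.1 ⊆ {n | Ck k n} ∧ Ck k p.2
    then some (jval h.1.choose p.2) else none⟩

lemma Gk_j_coe {k : ℕ} (s : Finset ℕ) (x : ℕ) (hs : ∀ m ∈ s, Ck k m) (hx : Ck k x) :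
    (Gk k).j (↑s, x) = some (jval s x) := by
  have h : (∃ t : Finset ℕ, (↑t : Set ℕ) = ↑s) ∧ (↑s : Set ℕ) ⊆ {n | Ck k n} ∧ Ck k x :=
    ⟨⟨s, rfl⟩, by intro m hm; exact hs m (by simpa using hm), hx⟩
  have hc : h.1.choose = s := Finset.coe_injective h.1.choose_spec
  simp only [Gk, dif_pos h, hc]

lemma Gk_j_eq_some {k : ℕ} {a : Set ℕ} {x y : ℕ} (h : (Gk k).j (a, x) = some y) :
    ∃ s : Finset ℕ, ↑s = a ∧ (∀ m ∈ s, Ck k m) ∧ Ck k x ∧ y = jval s x := by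
  by_cases hf : (∃ s : Finset ℕ, ↑s = a) ∧ a ⊆ {n | Ck k n} ∧ Ck k x
  · refine ⟨hf.1.choose, hf.1.choose_spec, ?_, hf.2.2, ?_⟩
    · intro m hm
      exact hf.2.1 (by rw [← hf.1.choose_spec]; simpa using hm)
    · simp only [Gk, dif_pos hf] at h
      exact (Option.some_injective _ h).symm
  · simp only [Gk, dif_neg hf] at h
    exact absurd h (by simp)

lemma Gk_j_le_Gmin {k : ℕ} {p : Set ℕ × ℕ} {y : ℕ} (h : (Gk k).j p = some y) :
    Gmin.j p = some y := by
  obtain ⟨a, x⟩ := p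
  obtain ⟨s, hs, -, -, hy⟩ := Gk_j_eq_some h
  rw [← hs, Gmin_j_coe, hy]

/-- monotonicity of interpretation in the pair and the environment. -/
lemma interp_mono {α : Type u} {P Q : PrePair α}
    (hj : ∀ p y, P.j p = some y → Q.j p = some y) :
    ∀ (M : Term) {ρ σ : ℕ → Set α}, (∀ n, ρ n ⊆ σ n) →
      interp P M ρ ⊆ interp Q M σ := by
  intro M
  induction M with
  | var n => intro ρ σ hρ z hz; exact hρ n hz
  | app M N ihM ihN =>
    rintro ρ σ hρ z ⟨a, hafin, haN, u, hj1, huM⟩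
    exact ⟨a, hafin, fun γ hγ => ihN hρ (haN hγ), u, hj _ _ hj1, ihM hρ huM⟩
  | lam M ih =>
    rintro ρ σ hρ z ⟨a, x, hafin, hj1, hx⟩
    refine ⟨a, x, hafin, hj _ _ hj1, ih ?_ hx⟩
    intro n; cases n with
    | zero => exact fun t ht => ht
    | succ n => exact hρ n

/-- pushing the interpretation forward along a morphism. -/
lemma interp_push {α : Type u} {β : Type v} {P : PrePair α} {Q : PrePair β} {f : α → β}
    (hf : ∀ (a : Set α) (x y : α), P.j (a, x) = some y → Q.j (f '' a, f x) = some (f y)) :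
    ∀ (M : Term) (ρ : ℕ → Set α), f '' interp P M ρ ⊆ interp Q M (fun n => f '' ρ n) := by
  intro M
  induction M with
  | var n => rintro ρ z ⟨w, hw, rfl⟩; exact ⟨w, hw, rfl⟩
  | app M N ihM ihN =>
    rintro ρ z ⟨w, ⟨a, hafin, haN, u, hj1, huM⟩, rfl⟩
    refine ⟨f '' a, hafin.image f, ?_, f u, hf _ _ _ hj1, ihM ρ ⟨u, huM, rfl⟩⟩
    rintro γ ⟨γ₀, hγ₀, rfl⟩
    exact ihN ρ ⟨γ₀, haN hγ₀, rfl⟩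
  | lam M ih =>
    rintro ρ z ⟨w, ⟨a, x, hafin, hj1, hx⟩, rfl⟩
    refine ⟨f '' a, f x, hafin.image f, hf _ _ _ hj1, ?_⟩
    have := ih (envCons a ρ) ⟨x, hx, rfl⟩
    have henv : (fun n => f '' envCons a ρ n) = envCons (f '' a) (fun n => f '' ρ n) := by
      funext n; cases n <;> rfl
    rwa [henv] at this

/-- the interpretation of a term in `Gk k` consists of pure elements. -/
lemma interp_Gk_pure {k : ℕ} : ∀ (M : Term) (ρ : ℕ → Set ℕ), (∀ n, ρ n ⊆ {n | Ck k n}) →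
    interp (Gk k) M ρ ⊆ {n | Ck k n} := by
  intro M
  induction M with
  | var n => intro ρ hρ z hz; exact hρ n hz
  | app M N ihM ihN =>
    rintro ρ hρ z ⟨a, hafin, haN, u, hj1, huM⟩
    obtain ⟨s, hs, -, hx, -⟩ := Gk_j_eq_some hj1
    exact hx
  | lam M ih =>
    rintro ρ hρ z ⟨a, x, hafin, hj1, hx⟩
    obtain ⟨s, hs, hsC, hxC, hy⟩ := Gk_j_eq_some hj1
    rw [hy]
    exact Ck_jval hsC hxC

lemma lt_dnode_of_mem {m : ℕ} {s : Finset ℕ} {x : ℕ} (h : m ∈ s) :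
    m < dnode (encF s) x := by
  have h1 : m < encF s := mem_lt_encF h
  have h2 : encF s ≤ Nat.pair (encF s) x := Nat.left_le_pair _ _
  unfold dnode; omega

lemma lt_dnode_right (c x : ℕ) : x < dnode c x := by
  have := Nat.right_le_pair c x
  unfold dnode; omega

/-- image of a finite set under an `Option`-valued map. -/
def pimgOf (f : ℕ → Option ℕ) (s : Finset ℕ) : Finset ℕ :=
  s.biUnion (fun m => ((f m).elim ∅ (fun w => {w})))

/-- the partial projection onto the `k`-pure part, as a well-founded recursion. -/
def projAux (k : ℕ) (n : ℕ) (rec : ∀ m, m < n → Option ℕ) : Option ℕ :=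
  if n % 2 = 1 then
    (if h : ∃ s : Finset ℕ, encF s = (Nat.unpair (n / 2)).1 then
      ((fun m => if hm : m < n then rec m hm else none) ((Nat.unpair (n / 2)).2)).elim none
        (fun x' => some (jval
          (pimgOf (fun m => if hm : m < n then rec m hm else none) h.choose) x'))
    else none)
  else
    (if (Nat.unpair (n / 2)).1 = k then some n else none)

def proj (k : ℕ) : ℕ → Option ℕ := WellFounded.fix (Nat.lt_wfRel.wf) (projAux k)

lemma proj_eq (k n : ℕ) : proj k n = projAux k n (fun m _ => proj k m) :=
  WellFounded.fix_eq _ _ _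

/-- image of a finite set under the projection. -/
def pimg (k : ℕ) (s : Finset ℕ) : Finset ℕ :=
  s.biUnion (fun m => ((proj k m).elim ∅ (fun w => {w})))

lemma mem_pimg {k : ℕ} {s : Finset ℕ} {w : ℕ} :
    w ∈ pimg k s ↔ ∃ v ∈ s, proj k v = some w := by
  simp only [pimg, Finset.mem_biUnion]
  constructor
  · rintro ⟨v, hv, hw⟩
    rcases hp : proj k v with _ | w'
    · rw [hp] at hw; simp [Option.elim] at hw
    · rw [hp] at hw; simp [Option.elim] at hw; exact ⟨v, hv, by rw [hp, hw]⟩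
  · rintro ⟨v, hv, hw⟩
    exact ⟨v, hv, by rw [hw]; simp [Option.elim]⟩

lemma proj_bs (k k' m : ℕ) : proj k (bs k' m) = if k' = k then some (bs k' m) else none := by
  rw [proj_eq]
  unfold projAux
  have h2 : ¬ bs k' m % 2 = 1 := by unfold bs; omega
  have h3 : bs k' m / 2 = Nat.pair k' m := by unfold bs; omega
  rw [if_neg h2, h3, Nat.unpair_pair]

lemma proj_dnode (k : ℕ) (s : Finset ℕ) (x : ℕ) :
    proj k (dnode (encF s) x) =
      (proj k x).elim none (fun x' => some (jval (pimg k s) x')) := by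
  rw [proj_eq]
  unfold projAux
  have h2 : dnode (encF s) x % 2 = 1 := by unfold dnode; omega
  have h3 : dnode (encF s) x / 2 = Nat.pair (encF s) x := by unfold dnode; omega
  rw [if_pos h2]
  simp only [h3, Nat.unpair_pair]
  have hex : ∃ t : Finset ℕ, encF t = encF s := ⟨s, rfl⟩
  rw [dif_pos hex]
  have hc : hex.choose = s := encF_injective hex.choose_spec
  have hxlt : x < dnode (encF s) x := lt_dnode_right _ _
  beta_reduce
  rw [dif_pos hxlt]
  have himg : pimgOf (fun m => if hm : m < dnode (encF s) x then proj k m else none)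
      hex.choose = pimg k s := by
    rw [hc]
    unfold pimgOf pimg
    refine Finset.biUnion_congr rfl ?_
    intro m hm
    show (if hm : m < dnode (encF s) x then proj k m else none).elim ∅ (fun w => ({w} : Finset ℕ))
        = (proj k m).elim ∅ (fun w => ({w} : Finset ℕ))
    rw [dif_pos (lt_dnode_of_mem hm)]
  rw [himg]

lemma proj_odd_none {k n : ℕ} (hodd : n % 2 = 1)
    (h : ¬ ∃ s : Finset ℕ, encF s = (Nat.unpair (n / 2)).1) : proj k n = none := by
  rw [proj_eq]; unfold projAux
  rw [if_pos hodd, dif_neg h]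

lemma pimg_self {k : ℕ} {s : Finset ℕ} (h : ∀ v ∈ s, proj k v = some v) :
    pimg k s = s := by
  ext w
  rw [mem_pimg]
  constructor
  · rintro ⟨v, hv, hw⟩
    rw [h v hv] at hw
    exact (Option.some_injective _ hw) ▸ hv
  · intro hw
    exact ⟨w, hw, h w hw⟩

lemma proj_id_Ck {k n : ℕ} (h : Ck k n) : proj k n = some n := by
  induction h with
  | base m => rw [proj_bs, if_pos rfl]
  | node s x hs hx hnf ihs ihx =>
    rw [proj_dnode, ihx]
    simp only [Option.elim]
    rw [pimg_self ihs, jval_nofact hnf]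

lemma proj_mem_Ck {k : ℕ} : ∀ n, ∀ {w : ℕ}, proj k n = some w → Ck k w := by
  intro n
  induction n using Nat.strong_induction_on with
  | _ n ih =>
    intro w hw
    by_cases hodd : n % 2 = 1
    · by_cases hex : ∃ s : Finset ℕ, encF s = (Nat.unpair (n / 2)).1
      · obtain ⟨s, hs⟩ := hex
        obtain ⟨x₀, hx₀⟩ : ∃ x₀, x₀ = (Nat.unpair (n / 2)).2 := ⟨_, rfl⟩
        have hform : n = dnode (encF s) x₀ := by
          unfold dnode
          rw [hs, hx₀, Nat.pair_unpair]
          omega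
        rw [hform, proj_dnode] at hw
        rcases hp : proj k x₀ with _ | x'
        · rw [hp] at hw; simp [Option.elim] at hw
        · rw [hp] at hw
          simp only [Option.elim, Option.some_inj] at hw
          subst hw
          refine Ck_jval ?_ ?_
          · intro m hm
            rw [mem_pimg] at hm
            obtain ⟨v, hv, hvw⟩ := hm
            exact ih v (by rw [hform]; exact lt_dnode_of_mem hv) hvw
          · exact ih x₀ (by rw [hform]; exact lt_dnode_right _ _) hp
      · rw [proj_odd_none hodd hex] at hw; simp at hw
    · obtain ⟨k₀, hk₀⟩ : ∃ k₀, k₀ = (Nat.unpair (n / 2)).1 := ⟨_, rfl⟩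
      obtain ⟨m₀, hm₀⟩ : ∃ m₀, m₀ = (Nat.unpair (n / 2)).2 := ⟨_, rfl⟩
      have hform : n = bs k₀ m₀ := by
        unfold bs
        rw [hk₀, hm₀, Nat.pair_unpair]
        omega
      rw [hform, proj_bs] at hw
      by_cases hk : k₀ = k
      · rw [if_pos hk] at hw
        cases Option.some_injective _ hw
        rw [hk]
        exact Ck.base _
      · rw [if_neg hk] at hw; simp at hw

lemma pimg_factset {k : ℕ} {t : Fact} : pimg k (t.1.image (bs k)) = t.1.image (bs k) := by
  refine pimg_self ?_
  intro v hv
  obtain ⟨i, hi, rfl⟩ := Finset.mem_image.mp hv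
  rw [proj_bs, if_pos rfl]

lemma projA {k : ℕ} {s : Finset ℕ} {x x' : ℕ} (h : proj k x = some x') :
    proj k (jval s x) = some (jval (pimg k s) x') := by
  by_cases hf : ∃ k' t, IsFact s x k' t
  · obtain ⟨k', t, hft⟩ := hf
    rw [jval_fact hft]
    have hx : x = bs k' t.2.1 := hft.2.1
    have hk : k' = k := by
      rw [hx, proj_bs] at h
      by_cases hkk : k' = k
      · exact hkk
      · rw [if_neg hkk] at h; simp at h
    subst hk
    have hx' : x' = x := by
      rw [hx, proj_bs, if_pos rfl] at h
      have := Option.some_injective _ h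
      rw [hx]
      exact this.symm
    have hximg : pimg k' s = s := by
      rw [hft.2.2]; exact pimg_factset
    rw [proj_bs, if_pos rfl, hximg, hx']
    rw [jval_fact hft]
  · rw [jval_nofact hf, proj_dnode, h]
    simp [Option.elim]

lemma projB {k : ℕ} {s : Finset ℕ} {x w : ℕ} (h : proj k (jval s x) = some w) :
    ∃ x', proj k x = some x' ∧ w = jval (pimg k s) x' := by
  by_cases hf : ∃ k' t, IsFact s x k' t
  · obtain ⟨k', t, hft⟩ := hf
    rw [jval_fact hft, proj_bs] at h
    by_cases hk : k' = k
    · subst hk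
      rw [if_pos rfl] at h
      have hw : w = bs k' t.2.2 := (Option.some_injective _ h).symm
      have hximg : pimg k' s = s := by rw [hft.2.2]; exact pimg_factset
      refine ⟨x, ?_, ?_⟩
      · rw [hft.2.1, proj_bs, if_pos rfl]
      · rw [hximg, jval_fact hft, hw]
    · rw [if_neg hk] at h; simp at h
  · rw [jval_nofact hf, proj_dnode] at h
    rcases hp : proj k x with _ | x'
    · rw [hp] at h; simp [Option.elim] at h
    · rw [hp] at h
      simp only [Option.elim, Option.some_inj] at h
      exact ⟨x', rfl, h.symm⟩

/-- projection of a set of elements. -/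
def pset (k : ℕ) (a : Set ℕ) : Set ℕ := {w | ∃ v ∈ a, proj k v = some w}

lemma pset_coe {k : ℕ} {s : Finset ℕ} {a : Set ℕ} (hs : ↑s = a) :
    pset k a = ↑(pimg k s) := by
  ext w
  simp only [pset, Set.mem_setOf_eq, Finset.coe_biUnion]
  rw [← hs]
  constructor
  · rintro ⟨v, hv, hvw⟩
    exact_mod_cast mem_pimg.mpr ⟨v, by simpa using hv, hvw⟩
  · intro hw
    obtain ⟨v, hv, hvw⟩ := mem_pimg.mp (by exact_mod_cast hw)
    exact ⟨v, by simpa using hv, hvw⟩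

lemma pset_pure {k : ℕ} {a : Set ℕ} (ha : a ⊆ {n | Ck k n}) : pset k a = a := by
  ext w
  constructor
  · rintro ⟨v, hv, hvw⟩
    have := proj_id_Ck (ha hv)
    rw [this] at hvw
    exact (Option.some_injective _ hvw) ▸ hv
  · intro hw
    exact ⟨w, hw, proj_id_Ck (ha hw)⟩

lemma pimg_mem_Ck {k : ℕ} {s : Finset ℕ} : ∀ m ∈ pimg k s, Ck k m := by
  intro m hm
  obtain ⟨v, -, hvw⟩ := mem_pimg.mp hm
  exact proj_mem_Ck v hvw

/-- the key collapsing lemma: the projection maps the interpretation in the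
minimal model into the interpretation in the `k`-th component model. -/
lemma claim2 {k : ℕ} : ∀ (M : Term) (ρ : ℕ → Set ℕ) (z z' : ℕ),
    proj k z = some z' → z ∈ interp Gmin M ρ →
    z' ∈ interp (Gk k) M (fun n => pset k (ρ n)) := by
  intro M
  induction M with
  | var n =>
    intro ρ z z' h hz
    exact ⟨z, hz, h⟩
  | app M N ihM ihN =>
    rintro ρ z z' h ⟨a, hafin, haN, u, hju, huM⟩
    obtain ⟨s, hs, hu⟩ := Gmin_j_eq_some hju
    have hproju : proj k u = some (jval (pimg k s) z') := by
      rw [hu]; exact projA h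
    have hM := ihM ρ u _ hproju huM
    refine ⟨↑(pimg k s), (pimg k s).finite_toSet, ?_, jval (pimg k s) z', ?_, hM⟩
    · intro w hw
      obtain ⟨v, hv, hvw⟩ := mem_pimg.mp (by exact_mod_cast hw)
      exact ihN ρ v w hvw (haN (by rw [← hs]; exact_mod_cast hv))
    · exact Gk_j_coe _ _ pimg_mem_Ck (proj_mem_Ck z h)
  | lam M ih =>
    rintro ρ z z' h ⟨a, x, hafin, hj1, hx⟩
    obtain ⟨s, hs, hz⟩ := Gmin_j_eq_some hj1
    rw [hz] at h
    obtain ⟨x', hpx, hz'⟩ := projB h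
    have hM := ih (envCons a ρ) x x' hpx hx
    have henv : (fun n => pset k (envCons a ρ n)) =
        envCons (↑(pimg k s)) (fun n => pset k (ρ n)) := by
      funext n
      cases n with
      | zero => exact pset_coe hs
      | succ n => rfl
    rw [henv] at hM
    refine ⟨↑(pimg k s), x', (pimg k s).finite_toSet, ?_, hM⟩
    rw [Gk_j_coe _ _ pimg_mem_Ck (proj_mem_Ck x hpx), hz']

/-- the order theory of the minimal model is included in that of each component
completion. -/
theorem thle_Gmin_Gk (k : ℕ) : ThLe Gmin ⊆ ThLe (Gk k) := by
  rintro ⟨M, N⟩ hMN ρ hρ z hz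
  have hzmin : z ∈ interp Gmin M ρ :=
    interp_mono (fun p y => Gk_j_le_Gmin) M (fun n => le_refl (ρ n)) hz
  have hzN : z ∈ interp Gmin N ρ := hMN ρ (fun n => Set.subset_univ _) hzmin
  have hzCk : Ck k z := interp_Gk_pure M ρ hρ hz
  have := claim2 N ρ z z (proj_id_Ck hzCk) hzN
  have henv : (fun n => pset k (ρ n)) = ρ := by
    funext n; exact pset_pure (hρ n)
  rwa [henv] at this

lemma interp_carrier {β : Type u} {H : PrePair β} (hH : H.Valid) :
    ∀ (M : Term) (ρ : ℕ → Set β), (∀ n, ρ n ⊆ H.carrier) → interp H M ρ ⊆ H.carrier := by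
  intro M
  induction M with
  | var n => intro ρ hρ z hz; exact hρ n hz
  | app M N ihM ihN =>
    rintro ρ hρ z ⟨a, hafin, haN, u, hju, huM⟩
    exact (hH.2.1 _ _ _ hju).2.2.1
  | lam M ih =>
    rintro ρ hρ z ⟨a, x, hafin, hj1, hx⟩
    exact (hH.2.1 _ _ _ hj1).2.2.2

/-- restriction of a pair to a set of argument pairs. -/
def restrictP {β : Type u} (H : PrePair β) (D : Set (Set β × β)) : PrePair β :=
  ⟨H.carrier, fun p => if p ∈ D then H.j p else none⟩

lemma restrictP_le {β : Type u} (H : PrePair β) (D : Set (Set β × β)) :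
    ∀ p y, (restrictP H D).j p = some y → H.j p = some y := by
  intro p y h
  by_cases hp : p ∈ D
  · simpa [restrictP, hp] using h
  · simp [restrictP, hp] at h

lemma restrictP_mono {β : Type u} {H : PrePair β} {D D' : Set (Set β × β)} (hD : D ⊆ D') :
    ∀ p y, (restrictP H D).j p = some y → (restrictP H D').j p = some y := by
  intro p y h
  by_cases hp : p ∈ D
  · simpa [restrictP, hp, hD hp] using h
  · simp [restrictP, hp] at h

lemma restrictP_some {β : Type u} {H : PrePair β} {D : Set (Set β × β)} {p : Set β × β}
    (hp : p ∈ D) {y : β} (hy : H.j p = some y) : (restrictP H D).j p = some y := by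
  simp [restrictP, hp, hy]

/-- finite support of a membership in the interpretation of a term. -/
lemma support {β : Type u} (H : PrePair β) :
    ∀ (M : Term) (ρ : ℕ → Set β) (α : β), α ∈ interp H M ρ →
    ∃ (D : Set (Set β × β)) (ρ₀ : ℕ → Set β),
      D.Finite ∧ (∀ p ∈ D, ∃ y, H.j p = some y) ∧
      (∀ n, ρ₀ n ⊆ ρ n) ∧ (⋃ n, ρ₀ n).Finite ∧
      α ∈ interp (restrictP H D) M ρ₀ := by
  intro M
  induction M with
  | var n =>
    intro ρ α hα
    refine ⟨∅, fun m => if m = n then {α} else ∅, Set.finite_empty, by simp, ?_, ?_, ?_⟩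
    · intro m
      by_cases hm : m = n
      · subst hm
        simp only [if_pos rfl]
        exact Set.singleton_subset_iff.mpr hα
      · simp [hm]
    · refine Set.Finite.subset (Set.finite_singleton α) ?_
      intro w hw
      simp only [Set.mem_iUnion] at hw
      obtain ⟨m, hm⟩ := hw
      by_cases h : m = n
      · rw [if_pos h] at hm; exact hm
      · rw [if_neg h] at hm; exact absurd hm (Set.notMem_empty w)
    · show α ∈ (if n = n then {α} else ∅ : Set β)
      simp
  | app M N ihM ihN =>
    rintro ρ α ⟨a, hafin, haN, u, hju, huM⟩
    obtain ⟨D₁, ρ₁, hD₁fin, hD₁facts, hρ₁sub, hρ₁fin, hM⟩ := ihM ρ u huM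
    have hch : ∀ γ : β, ∃ (D : Set (Set β × β)) (ρ' : ℕ → Set β), γ ∈ a →
        (D.Finite ∧ (∀ p ∈ D, ∃ y, H.j p = some y) ∧
         (∀ n, ρ' n ⊆ ρ n) ∧ (⋃ n, ρ' n).Finite ∧
         γ ∈ interp (restrictP H D) N ρ') := by
      intro γ
      by_cases hγ : γ ∈ a
      · obtain ⟨D, ρ', h1, h2, h3, h4, h5⟩ := ihN ρ γ (haN hγ)
        exact ⟨D, ρ', fun _ => ⟨h1, h2, h3, h4, h5⟩⟩
      · exact ⟨∅, fun _ => ∅, fun h => absurd h hγ⟩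
    choose D₂ ρ₂ hprop using hch
    refine ⟨D₁ ∪ (⋃ γ ∈ a, D₂ γ) ∪ {(a, α)},
            fun n => ρ₁ n ∪ ⋃ γ ∈ a, ρ₂ γ n, ?_, ?_, ?_, ?_, ?_⟩
    · refine ((hD₁fin.union ?_).union (Set.finite_singleton _))
      exact Set.Finite.biUnion hafin (fun γ hγ => (hprop γ hγ).1)
    · rintro p hp
      rcases hp with (hp | hp) | hp
      · exact hD₁facts p hp
      · simp only [Set.mem_iUnion] at hp
        obtain ⟨γ, hγ, hpγ⟩ := hp
        exact (hprop γ hγ).2.1 p hpγ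
      · rw [hp]; exact ⟨u, hju⟩
    · intro n
      refine Set.union_subset (hρ₁sub n) ?_
      intro w hw
      simp only [Set.mem_iUnion] at hw
      obtain ⟨γ, hγ, hwγ⟩ := hw
      exact (hprop γ hγ).2.2.1 n hwγ
    · refine Set.Finite.subset
        (Set.Finite.union hρ₁fin
          (Set.Finite.biUnion hafin (fun γ hγ => (hprop γ hγ).2.2.2.1))) ?_
      intro w hw
      obtain ⟨n, hn⟩ := Set.mem_iUnion.mp hw
      rcases hn with hn | hn
      · exact Or.inl (Set.mem_iUnion.mpr ⟨n, hn⟩)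
      · obtain ⟨γ, hγ⟩ := Set.mem_iUnion.mp hn
        obtain ⟨hγa, hwγ⟩ := Set.mem_iUnion.mp hγ
        exact Or.inr (Set.mem_iUnion.mpr ⟨γ,
          Set.mem_iUnion.mpr ⟨hγa, Set.mem_iUnion.mpr ⟨n, hwγ⟩⟩⟩)
    · refine ⟨a, hafin, ?_, u, ?_, ?_⟩
      · intro γ hγ
        refine interp_mono (restrictP_mono ?_) N (fun n => ?_) ((hprop γ hγ).2.2.2.2)
        · intro p hp
          exact Or.inl (Or.inr (by simp only [Set.mem_iUnion]; exact ⟨γ, hγ, hp⟩))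
        · intro w hw
          exact Or.inr (by simp only [Set.mem_iUnion]; exact ⟨γ, hγ, hw⟩)
      · exact restrictP_some (Or.inr rfl) hju
      · refine interp_mono (restrictP_mono ?_) M (fun n => ?_) hM
        · intro p hp; exact Or.inl (Or.inl hp)
        · intro w hw; exact Or.inl hw
  | lam M ih =>
    rintro ρ α ⟨a, x, hafin, hj1, hx⟩
    obtain ⟨D₁, ρ₁, hD₁fin, hD₁facts, hρ₁sub, hρ₁fin, hM⟩ := ih (envCons a ρ) x hx
    refine ⟨D₁ ∪ {(a, x)}, fun n => ρ₁ (n + 1), hD₁fin.union (Set.finite_singleton _),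
            ?_, ?_, ?_, ?_⟩
    · rintro p (hp | hp)
      · exact hD₁facts p hp
      · rw [hp]; exact ⟨α, hj1⟩
    · intro n
      exact hρ₁sub (n + 1)
    · refine Set.Finite.subset hρ₁fin ?_
      intro w hw
      simp only [Set.mem_iUnion] at hw ⊢
      obtain ⟨n, hn⟩ := hw
      exact ⟨n + 1, hn⟩
    · refine ⟨a, x, hafin, restrictP_some (Or.inr rfl) hj1, ?_⟩
      refine interp_mono (restrictP_mono (fun p hp => Or.inl hp)) M (fun n => ?_) hM
      cases n with
      | zero => exact hρ₁sub 0
      | succ n => exact fun w hw => hw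

variable {β : Type u}

/-- carrier subtype. -/
def Car (H : PrePair β) := {b // b ∈ H.carrier}

def foldProp (H : PrePair β) (s : Finset ℕ) (x : ℕ) (F : ℕ → Car H) : Prop :=
  ∃ y, H.j ((fun m => (F m).1) '' ↑s, (F x).1) = some y

lemma foldProp_holds (H : PrePair β) (htot : H.Total) (s : Finset ℕ) (x : ℕ)
    (F : ℕ → Car H) : foldProp H s x F :=
  htot _ _ (Set.Finite.image _ s.finite_toSet)
    (by rintro b ⟨m, hm, rfl⟩; exact (F m).2) (F x).2

def foldStep (H : PrePair β) (htot : H.Total) (hval : H.Valid) (s : Finset ℕ) (x : ℕ)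
    (F : ℕ → Car H) : Car H :=
  ⟨(foldProp_holds H htot s x F).choose,
    (hval.2.1 _ _ _ (foldProp_holds H htot s x F).choose_spec).2.2.2⟩

lemma foldStep_spec (H : PrePair β) (htot : H.Total) (hval : H.Valid) (s : Finset ℕ)
    (x : ℕ) (F : ℕ → Car H) :
    H.j ((fun m => (F m).1) '' ↑s, (F x).1) = some (foldStep H htot hval s x F).1 :=
  (foldProp_holds H htot s x F).choose_spec

/-- the recursive fold from codes back into an arbitrary graph model. -/
def foldAux (H : PrePair β) (htot : H.Total) (hval : H.Valid) (k : ℕ)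
    (pick : ℕ → Car H) (d : Car H) (n : ℕ) (rec : ∀ m, m < n → Car H) : Car H :=
  if n % 2 = 1 then
    (if h : ∃ s : Finset ℕ, encF s = (Nat.unpair (n / 2)).1 then
      foldStep H htot hval h.choose (Nat.unpair (n / 2)).2
        (fun m => if hm : m < n then rec m hm else d)
    else d)
  else
    (if (Nat.unpair (n / 2)).1 = k then pick (Nat.unpair (n / 2)).2 else d)

def foldF (H : PrePair β) (htot : H.Total) (hval : H.Valid) (k : ℕ)
    (pick : ℕ → Car H) (d : Car H) : ℕ → Car H :=
  WellFounded.fix Nat.lt_wfRel.wf (foldAux H htot hval k pick d)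

lemma foldF_eq (H : PrePair β) (htot : H.Total) (hval : H.Valid) (k : ℕ)
    (pick : ℕ → Car H) (d : Car H) (n : ℕ) :
    foldF H htot hval k pick d n
      = foldAux H htot hval k pick d n (fun m _ => foldF H htot hval k pick d m) :=
  WellFounded.fix_eq _ _ _

lemma foldF_bs (H : PrePair β) (htot : H.Total) (hval : H.Valid) (k : ℕ)
    (pick : ℕ → Car H) (d : Car H) (k' m : ℕ) :
    foldF H htot hval k pick d (bs k' m) = if k' = k then pick m else d := by
  rw [foldF_eq]
  unfold foldAux
  have h2 : ¬ bs k' m % 2 = 1 := by unfold bs; omega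
  have h3 : bs k' m / 2 = Nat.pair k' m := by unfold bs; omega
  rw [if_neg h2, h3, Nat.unpair_pair]

lemma foldF_dnode (H : PrePair β) (htot : H.Total) (hval : H.Valid) (k : ℕ)
    (pick : ℕ → Car H) (d : Car H) (s : Finset ℕ) (x : ℕ) :
    H.j ((fun m => (foldF H htot hval k pick d m).1) '' ↑s,
          (foldF H htot hval k pick d x).1)
      = some (foldF H htot hval k pick d (dnode (encF s) x)).1 := by
  conv_rhs => rw [foldF_eq]
  unfold foldAux
  have h2 : dnode (encF s) x % 2 = 1 := by unfold dnode; omega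
  have h3 : dnode (encF s) x / 2 = Nat.pair (encF s) x := by unfold dnode; omega
  rw [if_pos h2]
  simp only [h3, Nat.unpair_pair]
  have hex : ∃ t : Finset ℕ, encF t = encF s := ⟨s, rfl⟩
  rw [dif_pos hex]
  have hc : hex.choose = s := encF_injective hex.choose_spec
  rw [hc]
  have hspec := foldStep_spec H htot hval s x
      (fun m => if hm : m < dnode (encF s) x then foldF H htot hval k pick d m else d)
  have himg : ((fun m => ((if hm : m < dnode (encF s) x
        then foldF H htot hval k pick d m else d)).1) '' (↑s : Set ℕ))
      = ((fun m => (foldF H htot hval k pick d m).1) '' ↑s) := by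
    refine Set.image_congr ?_
    intro m hm
    rw [dif_pos (lt_dnode_of_mem (by exact_mod_cast hm))]
  have hxv : (if hm : x < dnode (encF s) x then foldF H htot hval k pick d x else d)
      = foldF H htot hval k pick d x := dif_pos (lt_dnode_right _ _)
  rw [himg, hxv] at hspec
  exact hspec

theorem thle_all_Gk_le {β : Type u} (H : PrePair β) (hH : H.IsGraphModel)
    {M N : Term} (hall : ∀ k : ℕ, (M, N) ∈ ThLe (Gk k)) : (M, N) ∈ ThLe H := by
  intro ρ hρ α hα
  by_contra hnα
  obtain ⟨hval, htot, hinf⟩ := hH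
  obtain ⟨D, ρ₀, hDfin, hDfacts, hρ₀sub, hρ₀fin, hmem⟩ := support H M ρ α hα
  obtain ⟨h₀, h₀car⟩ := hval.1
  classical
  set fval : Set β × β → β := fun p => (H.j p).getD h₀ with hfval
  have hfval_spec : ∀ p ∈ D, H.j p = some (fval p) := by
    intro p hp
    obtain ⟨y, hy⟩ := hDfacts p hp
    have hpy : fval p = y := by simp [hfval, hy]
    rw [hy, hpy]
  have hfval_pair : ∀ p ∈ D, H.j (p.1, p.2) = some (fval p) := by
    intro p hp
    rw [Prod.mk.eta]
    exact hfval_spec p hp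
  have hDfin1 : ∀ p ∈ D, (p.1 : Set β).Finite := fun p hp =>
    (hval.2.1 p.1 p.2 _ (hfval_pair p hp)).1
  -- the finite support set
  set S : Set β := (⋃ n, ρ₀ n) ∪ ((⋃ p ∈ D, (p.1 ∪ {p.2, fval p})) ∪ {α}) with hS
  have hSfin : S.Finite := by
    refine hρ₀fin.union (Set.Finite.union ?_ (Set.finite_singleton α))
    exact Set.Finite.biUnion hDfin (fun p hp =>
      (hDfin1 p hp).union ((Set.finite_singleton _).insert _))
  have hp1S : ∀ p ∈ D, p.1 ⊆ S := by
    intro p hp b hb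
    exact Or.inr (Or.inl (Set.mem_iUnion₂.mpr ⟨p, hp, Or.inl hb⟩))
  have hp2S : ∀ p ∈ D, p.2 ∈ S := by
    intro p hp
    exact Or.inr (Or.inl (Set.mem_iUnion₂.mpr ⟨p, hp, Or.inr (Or.inl rfl)⟩))
  have hfvS : ∀ p ∈ D, fval p ∈ S := by
    intro p hp
    exact Or.inr (Or.inl (Set.mem_iUnion₂.mpr ⟨p, hp, Or.inr (Or.inr rfl)⟩))
  have hρ₀S : ∀ n, ρ₀ n ⊆ S := by
    intro n b hb
    exact Or.inl (Set.mem_iUnion.mpr ⟨n, hb⟩)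
  have hαS : α ∈ S := Or.inr (Or.inr rfl)
  have hSsub : S ⊆ H.carrier := by
    rintro b (hb | (hb | hb))
    · obtain ⟨n, hn⟩ := Set.mem_iUnion.mp hb
      exact hρ n (hρ₀sub n hn)
    · obtain ⟨p, hp, hbp⟩ := Set.mem_iUnion₂.mp hb
      have hv := hval.2.1 p.1 p.2 _ (hfval_pair p hp)
      rcases hbp with hbp | hbp | hbp
      · exact hv.2.1 hbp
      · exact hbp ▸ hv.2.2.1
      · exact hbp ▸ hv.2.2.2
    · exact hb ▸ interp_carrier hval M ρ hρ hα
  obtain ⟨e, hinj⟩ := Set.countable_iff_exists_injOn.mp hSfin.countable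
  -- translated facts
  set tr : Set β × β → Fact := fun p =>
    (if h : (e '' p.1).Finite then h.toFinset else ∅, e p.2, e (fval p)) with htr
  set F : Finset Fact := hDfin.toFinset.image tr with hF
  have hmemF : ∀ t, t ∈ F ↔ ∃ p ∈ D, tr p = t := by
    intro t
    rw [hF, Finset.mem_image]
    constructor
    · rintro ⟨p, hp, ht⟩
      exact ⟨p, hDfin.mem_toFinset.mp hp, ht⟩
    · rintro ⟨p, hp, ht⟩
      exact ⟨p, hDfin.mem_toFinset.mpr hp, ht⟩
  have htr1 : ∀ (p : Set β × β) (hp : p ∈ D),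
      (tr p).1 = ((hDfin1 p hp).image e).toFinset := by
    intro p hp
    simp only [htr]
    rw [dif_pos ((hDfin1 p hp).image e)]
  have hvF : validF F := by
    intro t ht t' ht'
    obtain ⟨p, hp, rfl⟩ := (hmemF t).mp ht
    obtain ⟨q, hq, rfl⟩ := (hmemF t').mp ht'
    constructor
    · intro h22
      have hfv : fval p = fval q := hinj (hfvS p hp) (hfvS q hq) h22
      have hpq : p = q := by
        have h1 := hfval_pair p hp
        have h2 := hfval_pair q hq
        rw [← hfv] at h2
        have h3 := hval.2.2 (p.1, p.2) (q.1, q.2) (fval p) h1 h2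
        exact Prod.ext (congrArg Prod.fst h3) (congrArg Prod.snd h3)
      rw [hpq]
      exact ⟨rfl, rfl⟩
    · rintro ⟨h1, h2⟩
      have hq1 : p.1 = q.1 := by
        rw [htr1 p hp, htr1 q hq] at h1
        have himg : e '' p.1 = e '' q.1 := Set.Finite.toFinset_inj.mp h1
        exact (hinj.image_eq_image_iff (hp1S p hp) (hp1S q hq)).mp himg
      have hq2 : p.2 = q.2 := hinj (hp2S p hp) (hp2S q hq) h2
      have hpq : p = q := Prod.ext hq1 hq2
      rw [hpq]
  set k : ℕ := Encodable.encode F with hk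
  have hFk : Fk k = F := Fk_encode hvF
  set g : β → ℕ := fun b => bs k (e b) with hg
  -- positive transfer into `Gk k`
  have hgf : ∀ (a : Set β) (x y : β), (restrictP H D).j (a, x) = some y →
      (Gk k).j (g '' a, g x) = some (g y) := by
    intro a x y hxy
    have hpD : (a, x) ∈ D := by
      by_contra h
      simp [restrictP, h] at hxy
    have hjH : H.j (a, x) = some y := restrictP_le H D _ _ hxy
    have hy : fval (a, x) = y := by
      have := hfval_spec _ hpD
      rw [hjH] at this
      exact (Option.some_injective _ this).symm
    have htF : tr (a, x) ∈ F := (hmemF _).mpr ⟨(a, x), hpD, rfl⟩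
    have hfinea : (e '' a).Finite := (hDfin1 _ hpD).image e
    set s : Finset ℕ := (tr (a, x)).1.image (bs k) with hs
    have hscoe : (↑s : Set ℕ) = g '' a := by
      rw [hs, htr1 _ hpD]
      rw [Finset.coe_image, Set.Finite.coe_toFinset, Set.image_image]
    have hIsFact : IsFact s (g x) k (tr (a, x)) := ⟨hFk ▸ htF, rfl, hs⟩
    have hCs : ∀ m ∈ s, Ck k m := by
      intro m hm
      obtain ⟨i, hi, rfl⟩ := Finset.mem_image.mp (hs ▸ hm)
      exact Ck.base i
    have h1 : (Gk k).j (g '' a, g x) = (Gk k).j (↑s, g x) := by rw [hscoe]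
    rw [h1, Gk_j_coe s (g x) hCs (Ck.base (e x)), jval_fact hIsFact]
    have : (tr (a, x)).2.2 = e y := by rw [← hy]
    rw [this]
  have hpos : g α ∈ interp (Gk k) M (fun n => g '' ρ₀ n) :=
    interp_push hgf M ρ₀ ⟨α, hmem, rfl⟩
  have henvCk : ∀ n, (fun n => g '' ρ₀ n) n ⊆ (Gk k).carrier := by
    rintro n w ⟨b, hb, rfl⟩
    exact Ck.base (e b)
  have hposN : g α ∈ interp (Gk k) N (fun n => g '' ρ₀ n) :=
    hall k (fun n => g '' ρ₀ n) henvCk hpos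
  -- fold back into `H`
  set pick : ℕ → Car H := fun m =>
    if h : ∃ b, b ∈ S ∧ e b = m then ⟨h.choose, hSsub h.choose_spec.1⟩ else ⟨h₀, h₀car⟩
    with hpickdef
  have hpick : ∀ b ∈ S, (pick (e b)).1 = b := by
    intro b hb
    have hx : ∃ b', b' ∈ S ∧ e b' = e b := ⟨b, hb, rfl⟩
    rw [hpickdef]
    exact (congrArg Subtype.val (dite_cond_eq_true (eq_true hx))).trans
      (hinj hx.choose_spec.1 hb hx.choose_spec.2)
  set FF : ℕ → Car H := foldF H htot hval k pick ⟨h₀, h₀car⟩ with hFF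
  have hFFg : ∀ b ∈ S, (FF (g b)).1 = b := by
    intro b hb
    rw [hFF, hg]
    show (foldF H htot hval k pick (⟨h₀, h₀car⟩ : Car H) (bs k (e b))).1 = b
    exact (congrArg Subtype.val ((foldF_bs H htot hval k pick _ k (e b)).trans (if_pos rfl))).trans
      (hpick b hb)
  have hhom : ∀ (a : Set ℕ) (x y : ℕ), (Gk k).j (a, x) = some y →
      H.j ((fun n => (FF n).1) '' a, (FF x).1) = some ((FF y).1) := by
    intro a x y hxy
    obtain ⟨s, hsa, hsCk, hxCk, hyv⟩ := Gk_j_eq_some hxy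
    by_cases hf : ∃ k' t, IsFact s x k' t
    · obtain ⟨k', t, hft⟩ := hf
      have hxbs : x = bs k' t.2.1 := hft.2.1
      obtain ⟨m', hm'⟩ := Ck_even_bs hxCk (by rw [hxbs]; unfold bs; omega)
      obtain ⟨hkk, -⟩ := bs_inj (hxbs.symm.trans hm')
      subst hkk
      have htmem : t ∈ F := hFk ▸ hft.1
      obtain ⟨p, hpD, htp⟩ := (hmemF t).mp htmem
      have hx2 : x = g p.2 := by rw [hxbs, ← htp]
      have hFFx : (FF x).1 = p.2 := by rw [hx2]; exact hFFg p.2 (hp2S p hpD)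
      have haimg : (fun n => (FF n).1) '' a = p.1 := by
        rw [← hsa, hft.2.2, ← htp, htr1 p hpD]
        ext b
        constructor
        · rintro ⟨w, hw, rfl⟩
          obtain ⟨i, hi, rfl⟩ := Finset.mem_image.mp (by exact_mod_cast hw)
          obtain ⟨c, hc, rfl⟩ := by
            have := (Set.Finite.mem_toFinset _).mp hi
            exact this
          show (FF (g c)).1 ∈ p.1
          rw [hFFg c (hp1S p hpD hc)]
          exact hc
        · intro hb
          refine ⟨g b, ?_, hFFg b (hp1S p hpD hb)⟩
          have : e b ∈ ((hDfin1 p hpD).image e).toFinset :=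
            (Set.Finite.mem_toFinset _).mpr ⟨b, hb, rfl⟩
          exact_mod_cast Finset.mem_image.mpr ⟨e b, this, rfl⟩
      have hyval : y = g (fval p) := by
        rw [hyv, jval_fact hft, ← htp]
      have hFFy : (FF y).1 = fval p := by rw [hyval]; exact hFFg _ (hfvS p hpD)
      rw [haimg, hFFx, hFFy]
      exact hfval_pair p hpD
    · have hyv2 : y = dnode (encF s) x := by rw [hyv, jval_nofact hf]
      have hd := foldF_dnode H htot hval k pick ⟨h₀, h₀car⟩ s x
      rw [hsa] at hd
      rw [hyv2]
      exact hd
  have hneg : (FF (g α)).1 ∈ interp H N (fun n => (fun m => (FF m).1) '' (g '' ρ₀ n)) :=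
    interp_push hhom N (fun n => g '' ρ₀ n) ⟨g α, hposN, rfl⟩
  have hα' : (FF (g α)).1 = α := hFFg α hαS
  have henv : (fun n => (fun m => (FF m).1) '' (g '' ρ₀ n)) = ρ₀ := by
    funext n
    ext w
    constructor
    · rintro ⟨w', ⟨b, hb, rfl⟩, rfl⟩
      show (FF (g b)).1 ∈ ρ₀ n
      rw [hFFg b (hρ₀S n hb)]
      exact hb
    · intro hw
      exact ⟨g w, ⟨w, hw, rfl⟩, hFFg w (hρ₀S n hw)⟩
  rw [hα', henv] at hneg
  exact hnα (interp_mono (fun p y h => h) N hρ₀sub hneg)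

end
end MinGraph

open MinGraph in
/-- There exists a graph model whose order theory is minimum
among the order theories of all graph models; consequently its equational
theory is contained in that of every graph model. -/
theorem exists_minimum_graph_theory :
    ∃ G : PrePair ℕ, PrePair.IsGraphModel G ∧
      ∀ (β : Type u) (H : PrePair β), PrePair.IsGraphModel H →
        ThLe G ⊆ ThLe H ∧ Th G ⊆ Th H := by
  refine ⟨Gmin, Gmin_isGraphModel, ?_⟩
  intro β H hH
  have hle : ThLe Gmin ⊆ ThLe H := by
    rintro ⟨M, N⟩ hMN
    exact thle_all_Gk_le H hH (fun k => thle_Gmin_Gk k hMN)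
  refine ⟨hle, ?_⟩
  rintro ⟨M, N⟩ hMN
  have h1 : (M, N) ∈ ThLe Gmin := fun ρ hρ => le_of_eq (hMN ρ hρ)
  have h2 : (N, M) ∈ ThLe Gmin := fun ρ hρ => ge_of_eq (hMN ρ hρ)
  intro ρ hρ
  exact Set.Subset.antisymm (hle h1 ρ hρ) (hle h2 ρ hρ)
end

section
/- (Löwenheim–Skolem theorem for graph models) For every graph model G there exists a graph model G' whose web is a countable total subpair of the web of G and such that Th_⊑(G') = Th_⊑(G); hence also Th(G') = Th(G). -/
universe u v

open Term

/- ### Auxiliary development for the Löwenheim–Skolem theorem -/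

namespace LS

open scoped Classical

variable {α : Type u}

/-- The restriction of a pair to a subset of its carrier. -/
noncomputable def restrict (G : PrePair α) (C : Set α) : PrePair α :=
  ⟨C, fun p => if p.1.Finite ∧ p.1 ⊆ C ∧ p.2 ∈ C then G.j p else none⟩

lemma restrict_j_eq (G : PrePair α) (C : Set α) (p : Set α × α)
    (h : p.1.Finite ∧ p.1 ⊆ C ∧ p.2 ∈ C) : (restrict G C).j p = G.j p := by
  simp [restrict, h]

lemma restrict_j_some {G : PrePair α} {C : Set α} {p : Set α × α} {y : α}
    (h : (restrict G C).j p = some y) :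
    p.1.Finite ∧ p.1 ⊆ C ∧ p.2 ∈ C ∧ G.j p = some y := by
  by_cases hc : p.1.Finite ∧ p.1 ⊆ C ∧ p.2 ∈ C
  · rw [restrict_j_eq G C p hc] at h
    exact ⟨hc.1, hc.2.1, hc.2.2, h⟩
  · simp [restrict, hc] at h

lemma restrict_subpair (G : PrePair α) {C : Set α} (hC : C ⊆ G.carrier) :
    PrePair.Subpair (restrict G C) G :=
  ⟨hC, fun p y h => (restrict_j_some h).2.2.2⟩

lemma interp_mono_env (P : PrePair α) (M : Term) :
    ∀ {ρ₀ ρ : ℕ → Set α}, (∀ n, ρ₀ n ⊆ ρ n) → interp P M ρ₀ ⊆ interp P M ρ := by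
  induction M with
  | var n => intro ρ₀ ρ h; exact h n
  | app M N ihM ihN =>
      intro ρ₀ ρ h y hy
      obtain ⟨a, hfin, haN, z, hj, hz⟩ := hy
      exact ⟨a, hfin, fun x hx => ihN h (haN hx), z, hj, ihM h hz⟩
  | lam M ih =>
      intro ρ₀ ρ h y hy
      obtain ⟨a, x, hfin, hj, hx⟩ := hy
      refine ⟨a, x, hfin, hj, ih (fun n => ?_) hx⟩
      cases n with
      | zero => exact subset_rfl
      | succ n => exact h n

lemma interp_mono_pair {P Q : PrePair α} (h : PrePair.Subpair P Q) (M : Term) :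
    ∀ ρ, interp P M ρ ⊆ interp Q M ρ := by
  induction M with
  | var n => intro ρ; exact subset_rfl
  | app M N ihM ihN =>
      intro ρ y hy
      obtain ⟨a, hfin, haN, z, hj, hz⟩ := hy
      exact ⟨a, hfin, fun x hx => ihN ρ (haN hx), z, h.2 _ _ hj, ihM ρ hz⟩
  | lam M ih =>
      intro ρ y hy
      obtain ⟨a, x, hfin, hj, hx⟩ := hy
      exact ⟨a, x, hfin, h.2 _ _ hj, ih _ hx⟩

lemma restrict_carrier_eq (G : PrePair α) (hV : G.Valid) : restrict G G.carrier = G := by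
  obtain ⟨c, j⟩ := G
  unfold restrict
  congr 1
  funext p
  obtain ⟨a, x⟩ := p
  by_cases hc : a.Finite ∧ a ⊆ c ∧ x ∈ c
  · simp only [if_pos hc]
  · simp only [if_neg hc]
    cases hgj : j (a, x) with
    | none => rfl
    | some y =>
        obtain ⟨h1, h2, h3, _⟩ := hV.2.1 a x y hgj
        exact absurd ⟨h1, h2, h3⟩ hc

/-- `C` is closed under the total injection of `G`. -/
def JClosed (G : PrePair α) (C : Set α) : Prop :=
  ∀ a x y, Set.Finite a → a ⊆ C → x ∈ C → G.j (a, x) = some y → y ∈ C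

lemma interp_restrict_subset (G : PrePair α) {C : Set α} (hcl : JClosed G C) (M : Term) :
    ∀ ρ, (∀ n, ρ n ⊆ C) → interp (restrict G C) M ρ ⊆ C := by
  induction M with
  | var n => intro ρ hρ; exact hρ n
  | app M N ihM ihN =>
      intro ρ hρ y hy
      obtain ⟨a, hfin, haN, z, hj, hz⟩ := hy
      exact (restrict_j_some hj).2.2.1
  | lam M ih =>
      intro ρ hρ y hy
      obtain ⟨a, x, hfin, hj, hx⟩ := hy
      obtain ⟨h1, h2, h3, h4⟩ := restrict_j_some hj
      exact hcl a x y h1 h2 h3 h4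

end LS
namespace LS

variable {α : Type u}

open scoped Classical

/-- Finite-support lemma: any membership in the interpretation is supported by
a finite set `S` and a finite environment, and persists in every restriction
whose carrier contains `S`. -/
lemma support (G : PrePair α) (hV : G.Valid) (M : Term) :
    ∀ (ρ : ℕ → Set α) (β : α), (∀ n, ρ n ⊆ G.carrier) → β ∈ interp G M ρ →
    ∃ (S : Set α) (ρ' : ℕ → Set α) (d : ℕ),
      S.Finite ∧ S ⊆ G.carrier ∧ β ∈ S ∧
      (∀ n, ρ' n ⊆ ρ n) ∧ (∀ n, ρ' n ⊆ S) ∧ (∀ n, d ≤ n → ρ' n = ∅) ∧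
      ∀ C : Set α, S ⊆ C → β ∈ interp (restrict G C) M ρ' := by
  induction M with
  | var m =>
      intro ρ β hρ hβ
      have hβρ : β ∈ ρ m := hβ
      refine ⟨{β}, fun n => if n = m then {β} else ∅, m + 1, Set.finite_singleton β,
        Set.singleton_subset_iff.2 (hρ m hβρ), rfl, ?_, ?_, ?_, ?_⟩
      · intro n
        by_cases h : n = m
        · subst h; simpa using hβρ
        · simp [h]
      · intro n; by_cases h : n = m <;> simp [h]
      · intro n hn
        have : n ≠ m := by omega
        simp [this]
      · intro C hS
        show β ∈ (if m = m then ({β} : Set α) else ∅)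
        simp
  | app M N ihM ihN =>
      intro ρ β hρ hβ
      obtain ⟨a, hafin, haN, z, hj, hz⟩ := hβ
      obtain ⟨hafin', hacar, hβcar, hzcar⟩ := hV.2.1 a β z hj
      obtain ⟨Sz, ρz, dz, hSzfin, hSzc, hzSz, hρzle, hρzS, hρzd, hCz⟩ := ihM ρ z hρ hz
      have H : ∀ x : α, ∃ (S : Set α) (ρ' : ℕ → Set α) (d : ℕ), x ∈ a →
          (S.Finite ∧ S ⊆ G.carrier ∧ x ∈ S ∧
            (∀ n, ρ' n ⊆ ρ n) ∧ (∀ n, ρ' n ⊆ S) ∧ (∀ n, d ≤ n → ρ' n = ∅) ∧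
            ∀ C : Set α, S ⊆ C → x ∈ interp (restrict G C) N ρ') := by
        intro x
        by_cases hx : x ∈ a
        · obtain ⟨S, ρ', d, h⟩ := ihN ρ x hρ (haN hx)
          exact ⟨S, ρ', d, fun _ => h⟩
        · exact ⟨∅, fun _ => ∅, 0, fun hx' => absurd hx' hx⟩
      choose Sf ρf df hf using H
      have hafinset := hafin
      set da := hafin.toFinset.sup df with hda
      refine ⟨Sz ∪ (⋃ x ∈ a, Sf x) ∪ a ∪ {β}, fun n => ρz n ∪ ⋃ x ∈ a, ρf x n,
        max dz da, ?_, ?_, ?_, ?_, ?_, ?_, ?_⟩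
      · exact (((hSzfin.union (hafin.biUnion fun x hx => (hf x hx).1)).union hafin).union
          (Set.finite_singleton β))
      · refine Set.union_subset (Set.union_subset (Set.union_subset hSzc ?_) hacar) ?_
        · exact Set.iUnion₂_subset fun x hx => (hf x hx).2.1
        · simpa using hβcar
      · right; rfl
      · intro n
        refine Set.union_subset (hρzle n) (Set.iUnion₂_subset fun x hx => (hf x hx).2.2.2.1 n)
      · intro n
        refine Set.union_subset (fun t ht => Or.inl (Or.inl (Or.inl (hρzS n ht)))) ?_
        refine Set.iUnion₂_subset fun x hx t ht => ?_
        exact Or.inl (Or.inl (Or.inr (Set.mem_biUnion hx ((hf x hx).2.2.2.2.1 n ht))))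
      · intro n hn
        have h1 : ρz n = ∅ := hρzd n (le_trans (le_max_left _ _) hn)
        have h2 : ∀ x ∈ a, ρf x n = ∅ := by
          intro x hx
          refine (hf x hx).2.2.2.2.2.1 n ?_
          exact le_trans (le_trans (Finset.le_sup (hafin.mem_toFinset.2 hx)) (le_max_right dz da)) hn
        show ρz n ∪ (⋃ x ∈ a, ρf x n) = ∅
        rw [h1]
        simp only [Set.empty_union]
        ext t
        simp only [Set.mem_iUnion, Set.mem_empty_iff_false, iff_false, not_exists]
        intro x hx
        rw [h2 x hx]
        exact id
      · intro C hS
        have haC : a ⊆ C := fun x hx => hS (Or.inl (Or.inr hx))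
        have hβC : β ∈ C := hS (Or.inr rfl)
        refine ⟨a, hafin, ?_, z, ?_, ?_⟩
        · intro x hx
          have hx1 : x ∈ interp (restrict G C) N (ρf x) :=
            (hf x hx).2.2.2.2.2.2 C (fun t ht => hS (Or.inl (Or.inl (Or.inr (Set.mem_biUnion hx ht)))))
          exact interp_mono_env _ N (fun n t ht => Or.inr (Set.mem_biUnion hx ht)) hx1
        · rw [restrict_j_eq G C (a, β) ⟨hafin, haC, hβC⟩]; exact hj
        · have hz1 : z ∈ interp (restrict G C) M ρz :=
            hCz C (fun t ht => hS (Or.inl (Or.inl (Or.inl ht))))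
          exact interp_mono_env _ M (fun n t ht => Or.inl ht) hz1
  | lam M ih =>
      intro ρ β hρ hβ
      obtain ⟨a, x, hafin, hj, hx⟩ := hβ
      obtain ⟨_, hacar, hxcar, hβcar⟩ := hV.2.1 a x β hj
      have henv : ∀ n, envCons a ρ n ⊆ G.carrier := by
        intro n; cases n with
        | zero => exact hacar
        | succ n => exact hρ n
      obtain ⟨S1, ρ1, d1, h1fin, h1c, hxS1, h1le, h1S, h1d, hC1⟩ := ih (envCons a ρ) x henv hx
      refine ⟨S1 ∪ a ∪ {β}, fun n => ρ1 (n + 1), d1, ?_, ?_, ?_, ?_, ?_, ?_, ?_⟩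
      · exact (h1fin.union hafin).union (Set.finite_singleton β)
      · refine Set.union_subset (Set.union_subset h1c hacar) ?_
        simpa using hβcar
      · right; rfl
      · intro n; exact h1le (n + 1)
      · intro n t ht; exact Or.inl (Or.inl (h1S (n + 1) ht))
      · intro n hn; exact h1d (n + 1) (by omega)
      · intro C hS
        have haC : a ⊆ C := fun t ht => hS (Or.inl (Or.inr ht))
        have hxC : x ∈ C := hS (Or.inl (Or.inl hxS1))
        refine ⟨a, x, hafin, ?_, ?_⟩
        · rw [restrict_j_eq G C (a, x) ⟨hafin, haC, hxC⟩]; exact hj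
        · have hx1 : x ∈ interp (restrict G C) M ρ1 :=
            hC1 C (fun t ht => hS (Or.inl (Or.inl ht)))
          refine interp_mono_env _ M (fun n => ?_) hx1
          cases n with
          | zero => exact h1le 0
          | succ n => exact subset_rfl

end LS
namespace LS

variable {α : Type u}

open scoped Classical

/-- The witness condition. -/
def WitCond (G : PrePair α) (N : Term) (β : α) (ρ : ℕ → Set α) (S : Set α) : Prop :=
  S.Finite ∧ S ⊆ G.carrier ∧ β ∈ S ∧
  ∃ ρ' : ℕ → Set α, (∀ n, ρ' n ⊆ ρ n) ∧ (∀ n, ρ' n ⊆ S) ∧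
    ∀ C : Set α, S ⊆ C → β ∈ interp (restrict G C) N ρ'

/-- A chosen witness set. -/
noncomputable def witS (G : PrePair α) (N : Term) (β : α) (ρ : ℕ → Set α) : Set α :=
  if h : ∃ S, WitCond G N β ρ S then h.choose else ∅

lemma witS_spec {G : PrePair α} (hV : G.Valid) {N : Term} {β : α} {ρ : ℕ → Set α}
    (hρ : ∀ n, ρ n ⊆ G.carrier) (hβ : β ∈ interp G N ρ) :
    WitCond G N β ρ (witS G N β ρ) := by
  have h : ∃ S, WitCond G N β ρ S := by
    obtain ⟨S, ρ', d, h1, h2, h3, h4, h5, h6, h7⟩ := support G hV N ρ β hρ hβ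
    exact ⟨S, h1, h2, h3, ρ', h4, h5, h7⟩
  rw [witS, dif_pos h]
  exact h.choose_spec

lemma witS_finite (G : PrePair α) (N : Term) (β : α) (ρ : ℕ → Set α) :
    (witS G N β ρ).Finite := by
  rw [witS]
  split
  · next h => exact h.choose_spec.1
  · exact Set.finite_empty

lemma witS_carrier (G : PrePair α) (N : Term) (β : α) (ρ : ℕ → Set α) :
    witS G N β ρ ⊆ G.carrier := by
  rw [witS]
  split
  · next h => exact h.choose_spec.2.1
  · exact Set.empty_subset _

/-- Finitely supported, finite valued environments into `C`. -/
def FinEnvs (C : Set α) : Set (ℕ → Set α) :=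
  {ρ | (∀ n, (ρ n).Finite ∧ ρ n ⊆ C) ∧ ∃ d, ∀ n, d ≤ n → ρ n = ∅}

lemma countable_finEnvs {C : Set α} (hC : C.Countable) : (FinEnvs C).Countable := by
  have hT : {t : Set α | t.Finite ∧ t ⊆ C}.Countable := Set.countable_setOf_finite_subset hC
  haveI : Countable {t : Set α | t.Finite ∧ t ⊆ C} := hT.to_subtype
  rw [← Set.countable_coe_iff]
  refine Function.Injective.countable
    (f := fun ρ : FinEnvs C =>
      (⟨Nat.find ρ.2.2, fun i => ⟨ρ.1 i, ρ.2.1 i⟩⟩ :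
        Σ d : ℕ, Fin d → {t : Set α | t.Finite ∧ t ⊆ C})) ?_
  intro ρ σ h
  obtain ⟨h1, h2⟩ := Sigma.mk.inj_iff.1 h
  have h3 := (Fin.heq_fun_iff h1).1 h2
  apply Subtype.ext
  funext n
  by_cases hn : n < Nat.find ρ.2.2
  · exact congrArg Subtype.val (h3 ⟨n, hn⟩)
  · push_neg at hn
    rw [Nat.find_spec ρ.2.2 n hn, Nat.find_spec σ.2.2 n (h1 ▸ hn)]

instance : Countable Term := ⟨⟨Term.code, by
  intro M
  induction M with
  | var n =>
      intro N h
      cases N with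
      | var m =>
          simp only [Term.code] at h
          have : n = m := by omega
          rw [this]
      | app P Q => simp only [Term.code] at h; exfalso; omega
      | lam P => simp only [Term.code] at h; exfalso; omega
  | app M N ihM ihN =>
      intro K h
      cases K with
      | var m => simp only [Term.code] at h; exfalso; omega
      | app P Q =>
          simp only [Term.code] at h
          have : Nat.pair M.code N.code = Nat.pair P.code Q.code := by omega
          obtain ⟨h1, h2⟩ := Nat.pair_eq_pair.1 this
          rw [ihM h1, ihN h2]
      | lam P => simp only [Term.code] at h; exfalso; omega
  | lam M ih =>
      intro K h
      cases K with
      | var m => simp only [Term.code] at h; exfalso; omega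
      | app P Q => simp only [Term.code] at h; exfalso; omega
      | lam P =>
          simp only [Term.code] at h
          have : M.code = P.code := by omega
          rw [ih this]⟩⟩

end LS
namespace LS

variable {α : Type u}

open scoped Classical

/-- The stages of the Skolem hull. -/
noncomputable def stage (G : PrePair α) (C0 : Set α) : ℕ → Set α
  | 0 => C0
  | k + 1 => stage G C0 k
      ∪ (⋃ a ∈ {a : Set α | a.Finite ∧ a ⊆ stage G C0 k},
          ⋃ x ∈ stage G C0 k, {y | G.j (a, x) = some y})
      ∪ ⋃ N : Term, ⋃ β ∈ stage G C0 k, ⋃ ρ ∈ FinEnvs (stage G C0 k), witS G N β ρ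

lemma stage_succ_subset (G : PrePair α) (C0 : Set α) (k : ℕ) :
    stage G C0 k ⊆ stage G C0 (k + 1) :=
  fun t ht => Or.inl (Or.inl ht)

lemma stage_mono (G : PrePair α) (C0 : Set α) : Monotone (stage G C0) :=
  monotone_nat_of_le_succ (stage_succ_subset G C0)

lemma stage_countable {G : PrePair α} {C0 : Set α} (hC0 : C0.Countable) :
    ∀ k, (stage G C0 k).Countable := by
  intro k
  induction k with
  | zero => exact hC0
  | succ k ih =>
      refine (ih.union ?_).union ?_
      · refine (Set.countable_setOf_finite_subset ih).biUnion fun a _ => ?_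
        refine ih.biUnion fun x _ => ?_
        refine Set.Subsingleton.countable fun y hy z hz => ?_
        have : some y = some z := hy ▸ hz ▸ rfl
        exact Option.some.inj (hy.symm.trans hz)
      · refine Set.countable_iUnion fun N => ?_
        refine ih.biUnion fun β _ => ?_
        exact (countable_finEnvs ih).biUnion fun ρ _ => (witS_finite G N β ρ).countable

lemma stage_carrier {G : PrePair α} (hV : G.Valid) {C0 : Set α} (hC0 : C0 ⊆ G.carrier) :
    ∀ k, stage G C0 k ⊆ G.carrier := by
  intro k
  induction k with
  | zero => exact hC0
  | succ k ih =>
      refine Set.union_subset (Set.union_subset ih ?_) ?_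
      · refine Set.iUnion₂_subset fun a _ => Set.iUnion₂_subset fun x _ => fun y hy => ?_
        exact (hV.2.1 a x y hy).2.2.2
      · exact Set.iUnion_subset fun N => Set.iUnion₂_subset fun β _ =>
          Set.iUnion₂_subset fun ρ _ => witS_carrier G N β ρ

/-- The Skolem hull. -/
def hullSet (G : PrePair α) (C0 : Set α) : Set α := ⋃ k, stage G C0 k

lemma finite_subset_stage {G : PrePair α} {C0 : Set α} {s : Set α} (hs : s.Finite)
    (h : s ⊆ hullSet G C0) : ∃ k, s ⊆ stage G C0 k := by
  have H : ∀ x : α, ∃ k, x ∈ s → x ∈ stage G C0 k := by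
    intro x
    by_cases hx : x ∈ s
    · obtain ⟨k, hk⟩ := Set.mem_iUnion.1 (h hx)
      exact ⟨k, fun _ => hk⟩
    · exact ⟨0, fun h' => absurd h' hx⟩
  choose f hf using H
  refine ⟨hs.toFinset.sup f, fun x hx => stage_mono G C0 ?_ (hf x hx)⟩
  exact Finset.le_sup (hs.mem_toFinset.2 hx)

lemma hullSet_jclosed (G : PrePair α) (C0 : Set α) : JClosed G (hullSet G C0) := by
  intro a x y hafin ha hx hj
  obtain ⟨k, hk⟩ := finite_subset_stage (hafin.insert x) (Set.insert_subset hx ha)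
  have hak : a ⊆ stage G C0 k := (Set.subset_insert x a).trans hk
  have hxk : x ∈ stage G C0 k := hk (Set.mem_insert x a)
  refine Set.mem_iUnion.2 ⟨k + 1, Or.inl (Or.inr ?_)⟩
  exact Set.mem_biUnion ⟨hafin, hak⟩ (Set.mem_biUnion hxk hj)

lemma hullSet_wit (G : PrePair α) (C0 : Set α) (N : Term) {β : α} {ρ : ℕ → Set α}
    (hβ : β ∈ hullSet G C0) (hρfin : ∀ n, (ρ n).Finite) (hρ : ∀ n, ρ n ⊆ hullSet G C0)
    (hd : ∃ d, ∀ n, d ≤ n → ρ n = ∅) :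
    witS G N β ρ ⊆ hullSet G C0 := by
  obtain ⟨d, hdd⟩ := hd
  have hfin : ((⋃ n ∈ Finset.range d, ρ n) ∪ {β}).Finite :=
    ((Set.Finite.biUnion (Finset.range d).finite_toSet fun n _ => hρfin n).union
      (Set.finite_singleton β))
  have hsub : (⋃ n ∈ Finset.range d, ρ n) ∪ {β} ⊆ hullSet G C0 := by
    refine Set.union_subset (Set.iUnion₂_subset fun n _ => hρ n) ?_
    simpa using hβ
  obtain ⟨k, hk⟩ := finite_subset_stage hfin hsub
  have hβk : β ∈ stage G C0 k := hk (Or.inr rfl)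
  have hρk : ρ ∈ FinEnvs (stage G C0 k) := by
    refine ⟨fun n => ⟨hρfin n, ?_⟩, d, hdd⟩
    by_cases hn : n < d
    · intro t ht
      exact hk (Or.inl (Set.mem_biUnion (Finset.mem_range.2 hn) ht))
    · push_neg at hn
      rw [hdd n hn]
      exact Set.empty_subset _
  intro t ht
  refine Set.mem_iUnion.2 ⟨k + 1, Or.inr ?_⟩
  exact Set.mem_iUnion.2 ⟨N, Set.mem_biUnion hβk (Set.mem_biUnion hρk ht)⟩

/-- The hull property: membership in the big model implies membership in the
restricted model, for environments into the hull. -/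
lemma hull_interp {G : PrePair α} (hV : G.Valid) {C0 : Set α} (hC0 : C0 ⊆ G.carrier)
    (N : Term) {ρ : ℕ → Set α} {β : α}
    (hρ : ∀ n, ρ n ⊆ hullSet G C0) (hβC : β ∈ hullSet G C0)
    (hβ : β ∈ interp G N ρ) :
    β ∈ interp (restrict G (hullSet G C0)) N ρ := by
  have hCcar : hullSet G C0 ⊆ G.carrier :=
    Set.iUnion_subset (stage_carrier hV hC0)
  have hρcar : ∀ n, ρ n ⊆ G.carrier := fun n => (hρ n).trans hCcar
  obtain ⟨S, ρ', d, hSfin, hScar, hβS, hle, hS, hdsupp, hC⟩ := support G hV N ρ β hρcar hβ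
  have hβ' : β ∈ interp G N ρ' := by
    have := hC G.carrier hScar
    rwa [restrict_carrier_eq G hV] at this
  have hρ'hull : ∀ n, ρ' n ⊆ hullSet G C0 := fun n => (hle n).trans (hρ n)
  have hwit : witS G N β ρ' ⊆ hullSet G C0 :=
    hullSet_wit G C0 N hβC (fun n => hSfin.subset (hS n)) hρ'hull ⟨d, hdsupp⟩
  obtain ⟨_, _, _, ρ'', hle'', _, hC''⟩ :=
    witS_spec hV (fun n => ((hρ'hull n).trans hCcar : ρ' n ⊆ G.carrier)) hβ'
  exact interp_mono_env _ N (fun n => (hle'' n).trans (hle n)) (hC'' _ hwit)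

end LS
namespace LS

variable {α : Type u}

open scoped Classical

/-- Chosen witnesses for failures of inequalities in the theory of `G`. -/
noncomputable def negwit (G : PrePair α) (p : Term × Term) : Set α :=
  if h : ∃ (ρ : ℕ → Set α) (β : α), (∀ n, ρ n ⊆ G.carrier) ∧
      β ∈ interp G p.1 ρ ∧ β ∉ interp G p.2 ρ
  then witS G p.1 h.choose_spec.choose h.choose
  else ∅

lemma negwit_finite (G : PrePair α) (p : Term × Term) : (negwit G p).Finite := by
  rw [negwit]; split
  · exact witS_finite _ _ _ _
  · exact Set.finite_empty

lemma negwit_carrier (G : PrePair α) (p : Term × Term) : negwit G p ⊆ G.carrier := by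
  rw [negwit]; split
  · exact witS_carrier _ _ _ _
  · exact Set.empty_subset _

lemma negwit_spec {G : PrePair α} (hV : G.Valid) {p : Term × Term} (hp : p ∉ ThLe G)
    {C : Set α} (hC : C ⊆ G.carrier) (hsub : negwit G p ⊆ C) :
    p ∉ ThLe (restrict G C) := by
  have h : ∃ (ρ : ℕ → Set α) (β : α), (∀ n, ρ n ⊆ G.carrier) ∧
      β ∈ interp G p.1 ρ ∧ β ∉ interp G p.2 ρ := by
    simp only [ThLe, Set.mem_setOf_eq, not_forall] at hp
    obtain ⟨ρ, hρ, hns⟩ := hp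
    obtain ⟨β, hβ1, hβ2⟩ := Set.not_subset.1 hns
    exact ⟨ρ, β, hρ, hβ1, hβ2⟩
  rw [negwit, dif_pos h] at hsub
  set ρ := h.choose with hρdef
  set β := h.choose_spec.choose with hβdef
  obtain ⟨hρcar, hβ1, hβ2⟩ := h.choose_spec.choose_spec
  obtain ⟨_, _, _, ρ', hle', hS', hC'⟩ := witS_spec hV hρcar hβ1
  intro hT
  have hρ'C : ∀ n, ρ' n ⊆ C := fun n => (hS' n).trans hsub
  have h1 : β ∈ interp (restrict G C) p.1 ρ' := hC' C hsub
  have h2 : β ∈ interp (restrict G C) p.2 ρ' := hT ρ' hρ'C h1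
  have h3 : β ∈ interp G p.2 ρ :=
    interp_mono_env G p.2 hle' (interp_mono_pair (restrict_subpair G hC) p.2 ρ' h2)
  exact hβ2 h3

lemma Th_char (P : PrePair α) : Th P = {p | p ∈ ThLe P ∧ (p.2, p.1) ∈ ThLe P} := by
  ext p
  constructor
  · intro h
    exact ⟨fun ρ hρ => (h ρ hρ).subset, fun ρ hρ => (h ρ hρ).symm.subset⟩
  · intro h ρ hρ
    exact Set.Subset.antisymm (h.1 ρ hρ) (h.2 ρ hρ)

end LS
/-- **Löwenheim–Skolem for graph models.** Every graph model has
the same order (hence equational) theory as a graph model whose web is a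
countable total subpair of its web. -/
theorem lowenheim_skolem_graph {α : Type u} (G : PrePair α)
    (hG : PrePair.IsGraphModel G) :
    ∃ G' : PrePair α, PrePair.Subpair G' G ∧ G'.carrier.Countable ∧
      PrePair.IsGraphModel G' ∧ ThLe G' = ThLe G ∧ Th G' = Th G := by
  classical
  obtain ⟨hV, hTot, hInf⟩ := hG
  set C0 : Set α := (⋃ p : Term × Term, LS.negwit G p) ∪
    Set.range (fun n => ((Set.Infinite.natEmbedding G.carrier hInf n : G.carrier) : α)) with hC0def
  have hC0count : C0.Countable :=
    (Set.countable_iUnion fun p => (LS.negwit_finite G p).countable).union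
      (Set.countable_range _)
  have hC0car : C0 ⊆ G.carrier := by
    refine Set.union_subset (Set.iUnion_subset fun p => LS.negwit_carrier G p) ?_
    rintro y ⟨n, rfl⟩
    exact (Set.Infinite.natEmbedding G.carrier hInf n).2
  set C : Set α := LS.hullSet G C0 with hCdef
  have hCcar : C ⊆ G.carrier := Set.iUnion_subset (LS.stage_carrier hV hC0car)
  have hC0C : C0 ⊆ C := Set.subset_iUnion (LS.stage G C0) 0
  have hCcount : C.Countable := Set.countable_iUnion (LS.stage_countable hC0count)
  have hCinf : C.Infinite := by
    refine Set.Infinite.mono ?_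
      (Set.infinite_range_of_injective
        (f := fun n => ((Set.Infinite.natEmbedding G.carrier hInf n : G.carrier) : α))
        (Subtype.coe_injective.comp (Set.Infinite.natEmbedding G.carrier hInf).injective))
    exact (Set.subset_union_right).trans hC0C
  have hjcl := LS.hullSet_jclosed G C0
  have hThLe : ThLe (LS.restrict G C) = ThLe G := by
    refine Set.Subset.antisymm ?_ ?_
    · intro p hp
      by_contra hnp
      exact LS.negwit_spec hV hnp hCcar
        ((Set.subset_iUnion (fun p => LS.negwit G p) p).trans
          ((Set.subset_union_left).trans hC0C)) hp
    · intro p hp ρ hρ β hβ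
      have hβC : β ∈ C := LS.interp_restrict_subset G hjcl p.1 ρ hρ hβ
      have h1 : β ∈ interp G p.1 ρ :=
        LS.interp_mono_pair (LS.restrict_subpair G hCcar) p.1 ρ hβ
      have h2 : β ∈ interp G p.2 ρ := hp ρ (fun n => (hρ n).trans hCcar) h1
      exact LS.hull_interp hV hC0car p.2 hρ hβC h2
  refine ⟨LS.restrict G C, LS.restrict_subpair G hCcar, hCcount, ?_, hThLe, ?_⟩
  · refine ⟨⟨hCinf.nonempty, ?_, ?_⟩, ?_, hCinf⟩
    · intro a x y hj
      obtain ⟨h1, h2, h3, h4⟩ := LS.restrict_j_some hj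
      exact ⟨h1, h2, h3, hjcl a x y h1 h2 h3 h4⟩
    · intro p q y hp hq
      exact hV.2.2 p q y (LS.restrict_j_some hp).2.2.2 (LS.restrict_j_some hq).2.2.2
    · intro a x hafin ha hx
      obtain ⟨y, hy⟩ := hTot a x hafin (ha.trans hCcar) (hCcar hx)
      refine ⟨y, ?_⟩
      rw [LS.restrict_j_eq G C (a, x) ⟨hafin, ha, hx⟩]
      exact hy
  · rw [LS.Th_char, LS.Th_char, hThLe]
end

section
/- For every partial pair A, the interpretation of Ω = (λx.xx)(λx.xx) in the graph model G_Ā freely generated by A satisfies ⟦Ω⟧^{G_Ā} ⊆ A (all its elements have rank 0, i.e., lie in the original carrier set A). -/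
universe u v

open Term

namespace FC

variable {α : Type u}

/-- A depth measure on the free completion carrier type. -/
noncomputable def depth : FC α → ℕ
  | base _ => 0
  | node l x => 1 + max (depth x) ((l.attach.map fun y => depth y.1).foldr max 0)
decreasing_by
  all_goals simp_wf
  have := List.sizeOf_lt_of_mem y.2
  omega

lemma depth_node (l : List (FC α)) (x : FC α) :
    depth (node l x) = 1 + max (depth x) ((l.map depth).foldr max 0) := by
  rw [depth]
  congr 2
  simp [List.attach_map_val]

lemma depth_le_of_mem_list {l : List (FC α)} {m : FC α} (h : m ∈ l) :
    depth m ≤ (l.map depth).foldr max 0 := by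
  induction l with
  | nil => simp at h
  | cons a l ih =>
    rcases List.mem_cons.mp h with rfl | h
    · exact le_max_left _ _
    · exact le_trans (ih h) (le_max_right _ _)

lemma depth_lt_node {l : List (FC α)} {x m : FC α} (h : m ∈ l) :
    depth m < depth (node l x) := by
  calc depth m ≤ (l.map depth).foldr max 0 := depth_le_of_mem_list h
    _ ≤ max (depth x) ((l.map depth).foldr max 0) := le_max_right _ _
    _ < 1 + max (depth x) ((l.map depth).foldr max 0) := by omega
    _ = depth (node l x) := (depth_node l x).symm

lemma mem_listOf {c : Set (FC α)} (hc : c.Finite) {x : FC α} :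
    x ∈ listOf c ↔ x ∈ c := by
  unfold listOf
  rw [dif_pos hc]
  simp [Set.Finite.mem_toFinset]

/-- If the argument element is not (a copy of) an old element, `j̄` sends the
pair to the formal node. -/
lemma jbar_eq_node {A : PrePair α} (hA : A.Valid) {c : Set (FC α)} {x z : FC α}
    (h : jbar A (c, x) = some z) (hx : x ∉ base '' A.carrier) :
    z = node (listOf c) x := by
  unfold jbar at h
  split_ifs at h with h1 h2
  · exfalso
    obtain ⟨a₀, x₀, y₀, -, hx₀, hj, -⟩ := h2.choose_spec
    exact hx ⟨x₀, (hA.2.1 _ _ _ hj).2.2.1, hx₀.symm⟩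
  · exact (Option.some_inj.mp h).symm

/-- If `j̄` produces a formal node, the pair is determined. -/
lemma jbar_eq_node_inv {A : PrePair α} {b : Set (FC α)} {β : FC α}
    {l : List (FC α)} {x : FC α} (h : jbar A (b, β) = some (node l x)) :
    b.Finite ∧ listOf b = l ∧ β = x := by
  unfold jbar at h
  split_ifs at h with h1 h2
  · exfalso
    obtain ⟨a₀, x₀, y₀, -, -, -, hy⟩ := h2.choose_spec
    rw [Option.some_inj.mp h] at hy
    cases hy
  · obtain ⟨hl, hx⟩ := FC.node.inj (Option.some_inj.mp h)
    exact ⟨h1.1, hl, hx⟩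

end FC

open FC in
lemma omega_descent {α : Type u} (A : PrePair α) (hA : A.Valid) :
    ∀ n : ℕ, ∀ (c : Set (FC α)) (x : FC α), c.Finite →
      c ⊆ interp (completion A) Term.delta (fun _ => (∅ : Set (FC α))) →
      x ∉ FC.base '' A.carrier →
      (∀ m ∈ c, depth m < n) →
      (∃ z, jbar A (c, x) = some z ∧
        z ∈ interp (completion A) Term.delta (fun _ => (∅ : Set (FC α)))) →
      False := by
  intro n
  induction n with
  | zero =>
    intro c x hc hcD hx hdep ⟨z, hz, hzD⟩
    -- derive an element of c and contradict depth < 0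
    have hznode : z = node (listOf c) x := jbar_eq_node hA hz hx
    simp only [Term.delta, interp, Set.mem_setOf_eq] at hzD
    obtain ⟨b, β, hbfin, hjb, hβ⟩ := hzD
    obtain ⟨hbfin', hlb, hβx⟩ := jbar_eq_node_inv (hznode ▸ hjb)
    have hbc : b = c := Set.ext fun y => by
      rw [← mem_listOf hbfin', hlb, mem_listOf hc]
    subst hbc
    rw [hβx] at hβ
    obtain ⟨c₂, hc₂fin, hc₂b, w, hw, hwb⟩ := hβ
    exact absurd (hdep w hwb) (by omega)
  | succ n ih =>
    intro c x hc hcD hx hdep ⟨z, hz, hzD⟩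
    have hznode : z = node (listOf c) x := jbar_eq_node hA hz hx
    simp only [Term.delta, interp, Set.mem_setOf_eq] at hzD
    obtain ⟨b, β, hbfin, hjb, hβ⟩ := hzD
    obtain ⟨hbfin', hlb, hβx⟩ := jbar_eq_node_inv (hznode ▸ hjb)
    have hbc : b = c := Set.ext fun y => by
      rw [← mem_listOf hbfin', hlb, mem_listOf hc]
    subst hbc
    rw [hβx] at hβ
    obtain ⟨c₂, hc₂fin, hc₂b, w, hw, hwb⟩ := hβ
    have hwnode : w = node (listOf c₂) x := jbar_eq_node hA hw hx
    have hwD := hcD hwb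
    refine ih c₂ x hc₂fin (hc₂b.trans hcD) hx ?_ ⟨w, hw, hwD⟩
    intro m hm
    have h1 : depth m < depth w := by
      rw [hwnode]
      exact depth_lt_node ((mem_listOf hc₂fin).mpr hm)
    have h2 : depth w < n + 1 := hdep w hwb
    omega

/-- In the graph model freely generated by a partial pair
`A`, the interpretation of `Ω` is contained in (the copy of) `A`. -/
theorem omega_interp_in_base {α : Type u} (A : PrePair α) (hA : A.Valid) :
    interpC (completion A) Term.Omega ⊆ FC.base '' A.carrier := by
  intro x hx
  by_contra hxb
  simp only [interpC, Term.Omega, interp, Set.mem_setOf_eq] at hx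
  obtain ⟨a, hafin, haD, z, hz, hzD⟩ := hx
  classical
  refine omega_descent A hA (hafin.toFinset.sup FC.depth + 1) a x hafin haD hxb
    (fun m hm => ?_) ⟨z, hz, hzD⟩
  have : FC.depth m ≤ hafin.toFinset.sup FC.depth :=
    Finset.le_sup (Set.Finite.mem_toFinset hafin |>.mpr hm)
  omega
end
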